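/- arXiv:1306.0630 — 3 statements merged into one kernel-verified Lean document; each statement's English description precedes it below -/
import Mathlib

section
/- Let f be a boolean function with min{bs_0(f), bs_1(f)} ≥ 2. Then for every k ≥ 1, min{bs_0(f^(k)), bs_1(f^(k))} ≥ 2^k. In particular, min{bs_0(f^(k)), bs_1(f^(k))} tends to infinity as k → ∞. -/
open Filter

namespace BS

variable {I : Type*} [Fintype I] [DecidableEq I]

/-- Flip the bits of `x` indexed by `B`. -/
def flipSet (x : I → Bool) (B : Finset I) : I → Bool :=
  fun i => if i ∈ B then !(x i) else x i

/-- `B` is a block of `f` at `x`. -/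
def IsBlock (f : (I → Bool) → Bool) (x : I → Bool) (B : Finset I) : Prop :=
  f (flipSet x B) ≠ f x

/-- Block sensitivity of `f` at `x`: the maximum number of pairwise disjoint blocks. -/
noncomputable def bsAt (f : (I → Bool) → Bool) (x : I → Bool) : ℕ :=
  sSup {k | ∃ B : Fin k → Finset I, (∀ t, IsBlock f x (B t)) ∧
    ∀ t t', t ≠ t' → Disjoint (B t) (B t')}

/-- Block sensitivity of `f`. -/
noncomputable def bs (f : (I → Bool) → Bool) : ℕ :=
  sSup {k | ∃ x, k = bsAt f x}

/-- `b`-block sensitivity of `f`. -/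
noncomputable def bsb (f : (I → Bool) → Bool) (b : Bool) : ℕ :=
  sSup {k | ∃ x, f x = b ∧ k = bsAt f x}

/-- `M`-fold block sensitivity of `f` at `x`. -/
noncomputable def bsMAt (f : (I → Bool) → Bool) (M : ℕ) (x : I → Bool) : ℕ :=
  sSup {k | ∃ B : Fin k → Finset I, (∀ t, IsBlock f x (B t)) ∧
    ∀ i : I, (Finset.univ.filter (fun t => i ∈ B t)).card ≤ M}

/-- `M`-fold `b`-block sensitivity of `f`. -/
noncomputable def bsMb (f : (I → Bool) → Bool) (M : ℕ) (b : Bool) : ℕ :=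
  sSup {k | ∃ x, f x = b ∧ k = bsMAt f M x}

/-- Fractional block sensitivity of `f` at `x`. -/
noncomputable def fbsAt (f : (I → Bool) → Bool) (x : I → Bool) : ℝ :=
  sSup {s | ∃ lam : Finset I → ℝ, (∀ B, 0 ≤ lam B) ∧
    (∀ B, ¬ IsBlock f x B → lam B = 0) ∧
    (∀ i : I, ∑ B ∈ Finset.univ.filter (fun B : Finset I => i ∈ B), lam B ≤ 1) ∧
    s = ∑ B : Finset I, lam B}

/-- Fractional block sensitivity of `f`. -/
noncomputable def fbs (f : (I → Bool) → Bool) : ℝ :=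
  sSup {s | ∃ x, s = fbsAt f x}

/-- Fractional `b`-block sensitivity of `f`. -/
noncomputable def fbsb (f : (I → Bool) → Bool) (b : Bool) : ℝ :=
  sSup {s | ∃ x, f x = b ∧ s = fbsAt f x}

/-- Certificate complexity of `f` at `x`. -/
noncomputable def CAt (f : (I → Bool) → Bool) (x : I → Bool) : ℕ :=
  sInf {k | ∃ S : Finset I, (∀ B, IsBlock f x B → (S ∩ B).Nonempty) ∧ k = S.card}

/-- Certificate complexity of `f`. -/
noncomputable def Cm (f : (I → Bool) → Bool) : ℕ :=
  sSup {k | ∃ x, k = CAt f x}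

/-- `b`-certificate complexity of `f`. -/
noncomputable def Cb (f : (I → Bool) → Bool) (b : Bool) : ℕ :=
  sSup {k | ∃ x, f x = b ∧ k = CAt f x}

/-- Fractional certificate complexity of `f` at `x`. -/
noncomputable def fCAt (f : (I → Bool) → Bool) (x : I → Bool) : ℝ :=
  sInf {s | ∃ w : I → ℝ, (∀ i, 0 ≤ w i ∧ w i ≤ 1) ∧
    (∀ B, IsBlock f x B → 1 ≤ ∑ i ∈ B, w i) ∧ s = ∑ i, w i}

/-- Fractional certificate complexity of `f`. -/
noncomputable def fC (f : (I → Bool) → Bool) : ℝ :=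
  sSup {s | ∃ x, s = fCAt f x}

/-- Composition `f ∘ g` of boolean functions. -/
def comp {J : Type*} [Fintype J] [DecidableEq J]
    (f : (I → Bool) → Bool) (g : (J → Bool) → Bool) :
    ((I × J) → Bool) → Bool :=
  fun x => f (fun i => g (fun j => x (i, j)))

/-- `k`-fold iterated composition `f^(k)` of an `n`-variate boolean function; the
variables of `f^(k)` are indexed by strings in `Fin k → Fin n`.  `f^(0)` is the
univariate identity function. -/
def iter {n : ℕ} (f : (Fin n → Bool) → Bool) :
    (k : ℕ) → ((Fin k → Fin n) → Bool) → Bool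
  | 0, x => x (fun i => i.elim0)
  | k + 1, x => f (fun i => iter f k (fun s => x (Fin.cons i s)))

/-- Spectral radius of a real square matrix: the maximum of `|μ|` over the complex
eigenvalues `μ` of the matrix. -/
noncomputable def specRad {m : Type*} [Fintype m] [DecidableEq m]
    (A : Matrix m m ℝ) : ℝ :=
  sSup {r | ∃ μ : ℂ, μ ∈ spectrum ℂ (A.map Complex.ofReal) ∧ r = ‖μ‖}

end BS

open BS

namespace BSAux
variable {I : Type*} [Fintype I] [DecidableEq I]
set_option linter.unusedSectionVars false
set_option linter.unusedVariables false

lemma isBlock_nonempty {f : (I → Bool) → Bool} {x : I → Bool} {B : Finset I}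
    (h : IsBlock f x B) : B.Nonempty := by
  rcases B.eq_empty_or_nonempty with h0 | h1
  · exfalso; apply h; subst h0
    have : flipSet x ∅ = x := funext fun i => by simp [flipSet]
    rw [this]
  · exact h1

lemma bsAt_set_bdd {f : (I → Bool) → Bool} {x : I → Bool} {k : ℕ}
    (hk : ∃ B : Fin k → Finset I, (∀ t, IsBlock f x (B t)) ∧
      ∀ t t', t ≠ t' → Disjoint (B t) (B t')) : k ≤ Fintype.card I := by
  obtain ⟨B, hB, hD⟩ := hk
  have hne : ∀ t, (B t).Nonempty := fun t => isBlock_nonempty (hB t)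
  have hinj : Function.Injective (fun t => (hne t).choose) := by
    intro t t' he
    simp only at he
    by_contra hcon
    exact Finset.disjoint_left.mp (hD t t' hcon) (hne t).choose_spec
      (he ▸ (hne t').choose_spec)
  simpa using Fintype.card_le_of_injective _ hinj

lemma bsAt_set_nonempty (f : (I → Bool) → Bool) (x : I → Bool) :
    (0 : ℕ) ∈ {k | ∃ B : Fin k → Finset I, (∀ t, IsBlock f x (B t)) ∧
      ∀ t t', t ≠ t' → Disjoint (B t) (B t')} :=
  ⟨Fin.elim0, fun t => t.elim0, fun t => t.elim0⟩

lemma le_bsAt {f : (I → Bool) → Bool} {x : I → Bool} {k : ℕ}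
    (hk : ∃ B : Fin k → Finset I, (∀ t, IsBlock f x (B t)) ∧
      ∀ t t', t ≠ t' → Disjoint (B t) (B t')) : k ≤ bsAt f x :=
  le_csSup ⟨Fintype.card I, fun _ h => bsAt_set_bdd h⟩ hk

lemma bsAt_le_card (f : (I → Bool) → Bool) (x : I → Bool) :
    bsAt f x ≤ Fintype.card I :=
  csSup_le ⟨0, bsAt_set_nonempty f x⟩ (fun _ h => bsAt_set_bdd h)

lemma exists_blocks_of_le_bsAt {f : (I → Bool) → Bool} {x : I → Bool} {m : ℕ}
    (hm : m ≤ bsAt f x) :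
    ∃ B : Fin m → Finset I, (∀ t, IsBlock f x (B t)) ∧
      ∀ t t', t ≠ t' → Disjoint (B t) (B t') := by
  have hmem := Nat.sSup_mem ⟨0, bsAt_set_nonempty f x⟩
    ⟨Fintype.card I, fun _ h => bsAt_set_bdd h⟩
  obtain ⟨B, hB, hD⟩ := hmem
  refine ⟨fun t => B (Fin.castLE hm t), fun t => hB _, fun t t' hne => hD _ _ ?_⟩
  exact fun h => hne (Fin.ext (congrArg (fun u : Fin _ => (u : ℕ)) h :))

lemma bsAt_le_bsb {f : (I → Bool) → Bool} {x : I → Bool} {b : Bool} (hx : f x = b) :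
    bsAt f x ≤ bsb f b :=
  le_csSup ⟨Fintype.card I, fun k ⟨y, _, hy⟩ => hy ▸ bsAt_le_card f y⟩ ⟨x, hx, rfl⟩

lemma exists_x_of_le_bsb {f : (I → Bool) → Bool} {b : Bool} {m : ℕ}
    (hm : m ≤ bsb f b) (hpos : 0 < m) : ∃ x, f x = b ∧ m ≤ bsAt f x := by
  have hset : {k | ∃ x, f x = b ∧ k = bsAt f x}.Nonempty := by
    by_contra hc
    rw [Set.not_nonempty_iff_eq_empty] at hc
    rw [bsb, hc] at hm
    simp at hm
    omega
  obtain ⟨y, hy, hyv⟩ := Nat.sSup_mem hset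
    ⟨Fintype.card I, fun k ⟨z, _, hz⟩ => hz ▸ bsAt_le_card f z⟩
  exact ⟨y, hy, hyv ▸ hm⟩

end BSAux
namespace BSAux

lemma key {n : ℕ} (f : (Fin n → Bool) → Bool)
    (hf : ∀ b : Bool, ∃ x, f x = b ∧ ∃ B : Fin 2 → Finset (Fin n),
      (∀ t, IsBlock f x (B t)) ∧ ∀ t t', t ≠ t' → Disjoint (B t) (B t')) :
    ∀ (k : ℕ) (b : Bool), ∃ x, iter f k x = b ∧
      ∃ B : Fin (2 ^ k) → Finset (Fin k → Fin n),
        (∀ t, IsBlock (iter f k) x (B t)) ∧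
        ∀ t t', t ≠ t' → Disjoint (B t) (B t') := by
  intro k
  induction k with
  | zero =>
    intro b
    refine ⟨fun _ => b, rfl, fun _ => {fun i => i.elim0}, ?_, ?_⟩
    · intro t
      simp [IsBlock, iter, flipSet]
    · intro t t' hne
      exfalso; apply hne
      have h1 := t.isLt; have h2 := t'.isLt
      simp [pow_zero] at h1 h2
      exact Fin.ext (by omega)
  | succ k ih =>
    intro b
    obtain ⟨x, hx, Bf, hBf, hBfD⟩ := hf b
    choose y hy C hC hCD using ih
    set z : (Fin (k+1) → Fin n) → Bool := fun u => y (x (u 0)) (Fin.tail u) with hzdef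
    have hzc : ∀ (i : Fin n) (s : Fin k → Fin n), z (Fin.cons i s) = y (x i) s := by
      intro i s; simp [hzdef]
    have hiterz : iter f (k+1) z = b := by
      show f (fun i => iter f k (fun s => z (Fin.cons i s))) = b
      have he : ∀ i, (fun s => z (Fin.cons i s)) = y (x i) :=
        fun i => funext fun s => hzc i s
      calc f (fun i => iter f k (fun s => z (Fin.cons i s)))
          = f (fun i => x i) := by
            congr 1; funext i; rw [he i, hy (x i)]
        _ = b := hx
    set D : Fin 2 → Fin (2 ^ k) → Finset (Fin (k+1) → Fin n) :=
      fun t s => (Bf t).biUnion (fun i => (C (x i) s).image (Fin.cons i)) with hDdef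
    have hmemD : ∀ t s (u : Fin (k+1) → Fin n),
        u ∈ D t s ↔ u 0 ∈ Bf t ∧ Fin.tail u ∈ C (x (u 0)) s := by
      intro t s u
      simp only [hDdef, Finset.mem_biUnion, Finset.mem_image]
      constructor
      · rintro ⟨i, hi, v, hv, rfl⟩
        simpa using ⟨hi, hv⟩
      · rintro ⟨h1, h2⟩
        exact ⟨u 0, h1, Fin.tail u, h2, Fin.cons_self_tail u⟩
    have hblockD : ∀ t s, IsBlock (iter f (k+1)) z (D t s) := by
      intro t s
      have hflip : ∀ i : Fin n, (fun s' => flipSet z (D t s) (Fin.cons i s')) =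
          (if i ∈ Bf t then flipSet (y (x i)) (C (x i) s) else y (x i)) := by
        intro i
        funext s'
        by_cases hi : i ∈ Bf t
        · rw [if_pos hi]
          show flipSet z (D t s) (Fin.cons i s') = flipSet (y (x i)) (C (x i) s) s'
          by_cases hs' : s' ∈ C (x i) s
          · rw [flipSet, flipSet, if_pos, if_pos hs', hzc]
            rw [hmemD]; simpa using ⟨hi, hs'⟩
          · rw [flipSet, flipSet, if_neg, if_neg hs', hzc]
            rw [hmemD]; simp [hs']
        · rw [if_neg hi]
          show flipSet z (D t s) (Fin.cons i s') = y (x i) s'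
          rw [flipSet, if_neg, hzc]
          rw [hmemD]; simp [hi]
      have hval : iter f (k+1) (flipSet z (D t s)) = f (flipSet x (Bf t)) := by
        show f (fun i => iter f k (fun s' => flipSet z (D t s) (Fin.cons i s'))) = _
        congr 1
        funext i
        rw [hflip i]
        by_cases hi : i ∈ Bf t
        · rw [if_pos hi]
          have hne : iter f k (flipSet (y (x i)) (C (x i) s)) ≠ x i := by
            have h4 := hC (x i) s
            simp only [IsBlock, hy] at h4
            exact h4
          have heq : iter f k (flipSet (y (x i)) (C (x i) s)) = !(x i) := by
            revert hne
            cases hval : iter f k (flipSet (y (x i)) (C (x i) s)) <;>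
              cases x i <;> simp
          rw [heq]; simp [flipSet, hi]
        · rw [if_neg hi, hy (x i)]
          simp [flipSet, hi]
      show iter f (k+1) (flipSet z (D t s)) ≠ iter f (k+1) z
      rw [hval, hiterz, ← hx]
      exact hBf t
    have hdisjD : ∀ t s t' s', (t, s) ≠ (t', s') → Disjoint (D t s) (D t' s') := by
      intro t s t' s' hne
      rw [Finset.disjoint_left]
      intro u hu hu'
      rw [hmemD] at hu hu'
      by_cases ht : t = t'
      · subst ht
        have hs : s ≠ s' := by simpa using hne
        exact Finset.disjoint_left.mp (hCD (x (u 0)) s s' hs) hu.2 hu'.2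
      · exact Finset.disjoint_left.mp (hBfD t t' ht) hu.1 hu'.1
    have hcast : 2 ^ (k+1) = 2 * 2 ^ k := by ring
    set e : Fin (2 ^ (k+1)) → Fin 2 × Fin (2 ^ k) :=
      fun r => finProdFinEquiv.symm (Fin.cast hcast r) with hedef
    have einj : Function.Injective e := by
      intro a b hab
      have h2 := finProdFinEquiv.symm.injective hab
      have h3 : (a : ℕ) = (b : ℕ) := by simpa using congrArg Fin.val h2
      exact Fin.ext h3
    refine ⟨z, hiterz, fun r => D (e r).1 (e r).2, fun r => hblockD _ _, ?_⟩
    intro r r' hrr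
    apply hdisjD
    intro hcon
    apply hrr
    apply einj
    simpa using hcon

end BSAux

open Filter BS in
/-- If `min{bs_0(f), bs_1(f)} ≥ 2`, then for every `k ≥ 1`,
`min{bs_0(f^(k)), bs_1(f^(k))} ≥ 2^k`; in particular this minimum tends to
infinity as `k → ∞`. -/
theorem bs_min_ge_two_pow {n : ℕ} (f : (Fin n → Bool) → Bool)
    (h : 2 ≤ min (bsb f false) (bsb f true)) :
    (∀ k : ℕ, 1 ≤ k →
        2 ^ k ≤ min (bsb (iter f k) false) (bsb (iter f k) true)) ∧
      Filter.Tendsto (fun k : ℕ => min (bsb (iter f k) false) (bsb (iter f k) true))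
        Filter.atTop Filter.atTop := by
  rw [le_min_iff] at h
  have hf : ∀ b : Bool, ∃ x, f x = b ∧ ∃ B : Fin 2 → Finset (Fin n),
      (∀ t, IsBlock f x (B t)) ∧ ∀ t t', t ≠ t' → Disjoint (B t) (B t') := by
    intro b
    have hb : 2 ≤ bsb f b := by
      cases b
      · exact h.1
      · exact h.2
    obtain ⟨x, hx, hx2⟩ := BSAux.exists_x_of_le_bsb hb (by norm_num)
    exact ⟨x, hx, BSAux.exists_blocks_of_le_bsAt hx2⟩
  have key := BSAux.key f hf
  have main : ∀ k : ℕ, 2 ^ k ≤ min (bsb (iter f k) false) (bsb (iter f k) true) := by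
    intro k
    rw [le_min_iff]
    constructor
    · obtain ⟨x, hx, hB⟩ := key k false
      exact le_trans (BSAux.le_bsAt hB) (BSAux.bsAt_le_bsb hx)
    · obtain ⟨x, hx, hB⟩ := key k true
      exact le_trans (BSAux.le_bsAt hB) (BSAux.bsAt_le_bsb hx)
  refine ⟨fun k _ => main k, ?_⟩
  exact tendsto_atTop_mono main (tendsto_pow_atTop_atTop_of_one_lt one_lt_two)
end

section
/- Let f be an n-variate boolean function that is neither monotone nor antimonotone. Then the limit lim_{k→∞} bs(f^(k))^{1/k} exists and is finite. -/
open Filter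

namespace BS

variable {I : Type*} [Fintype I] [DecidableEq I]

/-! ### auxiliary -/
set_option linter.unusedSectionVars false

def HasBlocks (f : (I → Bool) → Bool) (x : I → Bool) (k : ℕ) : Prop :=
  ∃ B : Fin k → Finset I, (∀ t, IsBlock f x (B t)) ∧
    ∀ t t', t ≠ t' → Disjoint (B t) (B t')

variable {f : (I → Bool) → Bool} {x : I → Bool} {B : Finset I} {k : ℕ} {b : Bool}

lemma bsAt_eq : bsAt f x = sSup {k | HasBlocks f x k} := rfl

lemma flipSet_empty (x : I → Bool) : flipSet x ∅ = x := by
  funext i; simp [flipSet]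

lemma IsBlock.nonempty (h : IsBlock f x B) : B.Nonempty := by
  rcases B.eq_empty_or_nonempty with rfl | hne
  · exact absurd (by rw [flipSet_empty]) h
  · exact hne

lemma hasBlocks_zero : HasBlocks f x 0 :=
  ⟨fun t => t.elim0, fun t => t.elim0, fun t => t.elim0⟩

lemma HasBlocks.le_card (h : HasBlocks f x k) : k ≤ Fintype.card I := by
  obtain ⟨B, hB, hd⟩ := h
  choose a ha using fun t => (hB t).nonempty
  have hinj : Function.Injective a := by
    intro t t' htt
    by_contra hne
    exact (Finset.disjoint_left.1 (hd _ _ hne) (ha t)) (htt ▸ ha t')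
  calc k = Fintype.card (Fin k) := (Fintype.card_fin k).symm
    _ ≤ Fintype.card I := Fintype.card_le_of_injective a hinj

lemma bddAbove_hasBlocks : BddAbove {k | HasBlocks f x k} :=
  ⟨Fintype.card I, fun _ hk => hk.le_card⟩

lemma le_bsAt (h : HasBlocks f x k) : k ≤ bsAt f x :=
  le_csSup bddAbove_hasBlocks h

lemma bsAt_hasBlocks (f : (I → Bool) → Bool) (x : I → Bool) :
    HasBlocks f x (bsAt f x) :=
  Nat.sSup_mem (s := {k | HasBlocks f x k}) ⟨0, hasBlocks_zero⟩ bddAbove_hasBlocks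

lemma bsAt_le_card : bsAt f x ≤ Fintype.card I := (bsAt_hasBlocks f x).le_card

lemma bsAt_le_bs (f : (I → Bool) → Bool) (x : I → Bool) : bsAt f x ≤ bs f :=
  le_csSup ⟨Fintype.card I, by rintro k ⟨y, rfl⟩; exact bsAt_le_card⟩ ⟨x, rfl⟩

lemma bs_witness (f : (I → Bool) → Bool) : ∃ x, bs f = bsAt f x :=
  Nat.sSup_mem (s := {k | ∃ x, k = bsAt f x}) ⟨bsAt f (fun _ => false), ⟨_, rfl⟩⟩
    ⟨Fintype.card I, by rintro k ⟨y, rfl⟩; exact bsAt_le_card⟩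

lemma bsAt_le_bsb (hx : f x = b) : bsAt f x ≤ bsb f b :=
  le_csSup ⟨Fintype.card I, by rintro k ⟨y, _, rfl⟩; exact bsAt_le_card⟩ ⟨x, hx, rfl⟩

lemma bsb_witness (h : ∃ x, f x = b) : ∃ x, f x = b ∧ bsb f b = bsAt f x := by
  obtain ⟨x₀, hx₀⟩ := h
  exact Nat.sSup_mem (s := {k | ∃ x, f x = b ∧ k = bsAt f x}) ⟨bsAt f x₀, ⟨x₀, hx₀, rfl⟩⟩
    ⟨Fintype.card I, by rintro k ⟨y, _, rfl⟩; exact bsAt_le_card⟩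

lemma bsb_le_bs (f : (I → Bool) → Bool) (b : Bool) : bsb f b ≤ bs f := by
  by_cases h : ∃ x, f x = b
  · obtain ⟨x, _, he⟩ := bsb_witness h
    rw [he]; exact bsAt_le_bs f x
  · have : {k | ∃ x, f x = b ∧ k = bsAt f x} = ∅ := by
      ext k; simp only [Set.mem_setOf_eq, Set.mem_empty_iff_false, iff_false]
      rintro ⟨x, hx, _⟩; exact h ⟨x, hx⟩
    rw [bsb, this, csSup_empty]
    exact Nat.zero_le _

lemma bs_le_max (f : (I → Bool) → Bool) : bs f ≤ max (bsb f false) (bsb f true) := by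
  obtain ⟨x, he⟩ := bs_witness f
  rw [he]
  cases hfx : f x
  · exact le_max_of_le_left (bsAt_le_bsb hfx)
  · exact le_max_of_le_right (bsAt_le_bsb hfx)

lemma one_le_bsAt (h : ∃ y, f y ≠ f x) : 1 ≤ bsAt f x := by
  obtain ⟨y, hy⟩ := h
  set B : Finset I := Finset.univ.filter (fun i => x i ≠ y i) with hBdef
  have hflip : flipSet x B = y := by
    funext i
    by_cases h : x i = y i
    · simp [flipSet, hBdef, h]
    · simp only [flipSet, hBdef, Finset.mem_filter, Finset.mem_univ, true_and,
        if_pos h]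
      revert h; cases x i <;> cases y i <;> simp
  refine le_bsAt ⟨fun _ => B, fun _ => ?_, fun t t' htt => absurd (Subsingleton.elim t t') htt⟩
  rw [IsBlock, hflip]
  exact hy

/-! ### reindexing -/

section Reindex

variable {I' : Type*} [Fintype I'] [DecidableEq I']

def reindex (e : I ≃ I') (h : (I → Bool) → Bool) : (I' → Bool) → Bool :=
  fun x => h (fun i => x (e i))

lemma mem_image_symm {e : I ≃ I'} {B : Finset I'} {i : I} :
    i ∈ B.image e.symm ↔ e i ∈ B := by
  simp only [Finset.mem_image]
  constructor
  · rintro ⟨a, ha, rfl⟩; simpa using ha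
  · intro h; exact ⟨e i, h, by simp⟩

lemma mem_image_self {e : I ≃ I'} {C : Finset I} {i : I} :
    e i ∈ C.image e ↔ i ∈ C := by
  simp only [Finset.mem_image]
  constructor
  · rintro ⟨a, ha, hae⟩; rwa [e.injective hae] at ha
  · intro h; exact ⟨i, h, rfl⟩

lemma hasBlocks_reindex (e : I ≃ I') (h : (I → Bool) → Bool) (x : I' → Bool) (k : ℕ) :
    HasBlocks (reindex e h) x k ↔ HasBlocks h (fun i => x (e i)) k := by
  constructor
  · rintro ⟨B, hB, hd⟩
    refine ⟨fun t => (B t).image e.symm, fun t => ?_, fun t t' htt => ?_⟩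
    · have hkey : flipSet (fun i => x (e i)) ((B t).image e.symm)
          = fun i => flipSet x (B t) (e i) := by
        funext i
        simp only [flipSet, mem_image_symm]
      rw [IsBlock, hkey]
      exact hB t
    · exact (Finset.disjoint_image e.symm.injective).2 (hd t t' htt)
  · rintro ⟨C, hC, hd⟩
    refine ⟨fun t => (C t).image e, fun t => ?_, fun t t' htt => ?_⟩
    · have hkey : (fun i => flipSet x ((C t).image e) (e i))
          = flipSet (fun i => x (e i)) (C t) := by
        funext i
        simp only [flipSet, mem_image_self]
      show h (fun i => flipSet x ((C t).image e) (e i)) ≠ h (fun i => x (e i))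
      rw [hkey]
      exact hC t
    · exact (Finset.disjoint_image e.injective).2 (hd t t' htt)

lemma bsAt_reindex (e : I ≃ I') (h : (I → Bool) → Bool) (x : I' → Bool) :
    bsAt (reindex e h) x = bsAt h (fun i => x (e i)) := by
  rw [bsAt_eq, bsAt_eq]
  congr 1
  ext k
  exact hasBlocks_reindex e h x k

lemma bsb_reindex (e : I ≃ I') (h : (I → Bool) → Bool) (b : Bool) :
    bsb (reindex e h) b = bsb h b := by
  unfold bsb
  congr 1
  ext k
  constructor
  · rintro ⟨x, hx, rfl⟩
    exact ⟨fun i => x (e i), hx, bsAt_reindex e h x⟩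
  · rintro ⟨x, hx, rfl⟩
    refine ⟨fun i' => x (e.symm i'), ?_, ?_⟩
    · show h (fun i => x (e.symm (e i))) = b
      simpa using hx
    · rw [bsAt_reindex]
      congr 1
      funext i
      simp
  
lemma bs_reindex (e : I ≃ I') (h : (I → Bool) → Bool) :
    bs (reindex e h) = bs h := by
  unfold bs
  congr 1
  ext k
  constructor
  · rintro ⟨x, rfl⟩
    exact ⟨fun i => x (e i), bsAt_reindex e h x⟩
  · rintro ⟨x, rfl⟩
    refine ⟨fun i' => x (e.symm i'), ?_⟩
    rw [bsAt_reindex]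
    congr 1
    funext i
    simp

end Reindex

/-! ### composition lemmas -/

section Comp

variable {J : Type*} [Fintype J] [DecidableEq J]

lemma bool_eq_not {a c : Bool} (h : a ≠ c) : a = !c := by
  cases a <;> cases c <;> simp_all

lemma bsb_comp_ge (f : (I → Bool) → Bool) (g : (J → Bool) → Bool)
    (hg : ∀ c, ∃ y, g y = c) (b : Bool) (hf : ∃ x, f x = b) :
    bsb f b * min (bsb g false) (bsb g true) ≤ bsb (comp f g) b := by
  obtain ⟨x, hxb, hxe⟩ := bsb_witness hf
  obtain ⟨B, hB, hBd⟩ := bsAt_hasBlocks f x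
  have hyex : ∀ i : I, ∃ y, g y = x i ∧ bsb g (x i) = bsAt g y :=
    fun i => bsb_witness (hg (x i))
  choose y hy1 hy2 using hyex
  have hwle : ∀ i, min (bsb g false) (bsb g true) ≤ bsAt g (y i) := by
    intro i
    rw [← hy2 i]
    cases x i
    · exact min_le_left _ _
    · exact min_le_right _ _
  choose C hC1 hC2 using fun i => bsAt_hasBlocks g (y i)
  have hXval : comp f g (fun p : I × J => y p.1 p.2) = b := by
    show f (fun i => g (fun j => y i j)) = b
    have : (fun i => g (fun j => y i j)) = x := funext fun i => hy1 i
    rw [this, hxb]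
  set D : Fin (bsAt f x) × Fin (min (bsb g false) (bsb g true)) → Finset (I × J) :=
    fun q => (B q.1).biUnion
      (fun i => ({i} : Finset I) ×ˢ C i (Fin.castLE (hwle i) q.2)) with hD
  have hDmem : ∀ q p, p ∈ D q ↔ p.1 ∈ B q.1 ∧ p.2 ∈ C p.1 (Fin.castLE (hwle p.1) q.2) := by
    intro q p
    simp only [hD, Finset.mem_biUnion, Finset.mem_product, Finset.mem_singleton]
    constructor
    · rintro ⟨i, hi, rfl, h2⟩
      exact ⟨hi, h2⟩
    · rintro ⟨h1, h2⟩
      exact ⟨p.1, h1, rfl, h2⟩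
  have hblock : ∀ q, IsBlock (comp f g) (fun p : I × J => y p.1 p.2) (D q) := by
    intro q
    have key : (fun i => g (fun j => flipSet (fun p : I × J => y p.1 p.2) (D q) (i, j)))
        = flipSet x (B q.1) := by
      funext i
      by_cases hi : i ∈ B q.1
      · have h1 : (fun j => flipSet (fun p : I × J => y p.1 p.2) (D q) (i, j))
            = flipSet (y i) (C i (Fin.castLE (hwle i) q.2)) := by
          funext j
          simp only [flipSet, hDmem]
          simp [hi]
        rw [h1]
        have h2 : g (flipSet (y i) (C i (Fin.castLE (hwle i) q.2))) = !(x i) := by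
          rw [← hy1 i]
          exact bool_eq_not (hC1 i (Fin.castLE (hwle i) q.2))
        rw [h2]
        simp [flipSet, hi]
      · have h1 : (fun j => flipSet (fun p : I × J => y p.1 p.2) (D q) (i, j)) = y i := by
          funext j
          simp only [flipSet, hDmem]
          simp [hi]
        rw [h1, hy1 i]
        simp [flipSet, hi]
    show comp f g (flipSet (fun p : I × J => y p.1 p.2) (D q))
        ≠ comp f g (fun p : I × J => y p.1 p.2)
    rw [hXval]
    show f (fun i => g (fun j => flipSet (fun p : I × J => y p.1 p.2) (D q) (i, j))) ≠ b
    rw [key, ← hxb]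
    exact hB q.1
  have hdisj : ∀ q q', q ≠ q' → Disjoint (D q) (D q') := by
    intro q q' hqq
    rw [Finset.disjoint_left]
    intro p hp hp'
    rw [hDmem] at hp hp'
    by_cases h1 : q.1 = q'.1
    · have h2 : q.2 ≠ q'.2 := fun h2 => hqq (Prod.ext h1 h2)
      have hne : Fin.castLE (hwle p.1) q.2 ≠ Fin.castLE (hwle p.1) q'.2 :=
        fun hc => h2 (Fin.castLE_injective _ hc)
      exact (Finset.disjoint_left.1 (hC2 p.1 _ _ hne) hp.2) hp'.2
    · exact (Finset.disjoint_left.1 (hBd _ _ h1) hp.1) hp'.1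
  have hHB : HasBlocks (comp f g) (fun p : I × J => y p.1 p.2)
      (bsAt f x * min (bsb g false) (bsb g true)) := by
    refine ⟨fun t => D (finProdFinEquiv.symm t), fun t => hblock _, fun t t' htt => ?_⟩
    exact hdisj _ _ (fun hc => htt (finProdFinEquiv.symm.injective hc))
  calc bsb f b * min (bsb g false) (bsb g true)
      = bsAt f x * min (bsb g false) (bsb g true) := by rw [hxe]
    _ ≤ bsAt (comp f g) (fun p : I × J => y p.1 p.2) := le_bsAt hHB
    _ ≤ bsb (comp f g) b := bsAt_le_bsb hXval

lemma bsb_comp_cross (f : (I → Bool) → Bool) (g : (J → Bool) → Bool)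
    (hg : ∀ c, ∃ y, g y = c) {b b' : Bool} (z : I → Bool) (i : I)
    (hz : f z = b) (hzi : z i = b') (hflip : f (Function.update z i (!b')) = !b) :
    bsb g b' ≤ bsb (comp f g) b := by
  obtain ⟨y', hy'b, hy'e⟩ := bsb_witness (hg b')
  obtain ⟨C, hC1, hC2⟩ := bsAt_hasBlocks g y'
  choose Y hY using hg
  set yc : I → (J → Bool) := fun i' => if i' = i then y' else Y (z i') with hyc
  have hval : ∀ i', g (yc i') = z i' := by
    intro i'
    by_cases h : i' = i
    · subst h
      simp [hyc, hy'b, hzi]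
    · simp [hyc, h, hY]
  have hXval : comp f g (fun p : I × J => yc p.1 p.2) = b := by
    show f (fun i' => g (fun j => yc i' j)) = b
    have : (fun i' => g (fun j => yc i' j)) = z := funext fun i' => hval i'
    rw [this, hz]
  set D : Fin (bsAt g y') → Finset (I × J) :=
    fun r => ({i} : Finset I) ×ˢ C r with hD
  have hDmem : ∀ r (p : I × J), p ∈ D r ↔ p.1 = i ∧ p.2 ∈ C r := by
    intro r p
    simp only [hD, Finset.mem_product, Finset.mem_singleton]
  have hblock : ∀ r, IsBlock (comp f g) (fun p : I × J => yc p.1 p.2) (D r) := by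
    intro r
    have key : (fun i' => g (fun j => flipSet (fun p : I × J => yc p.1 p.2) (D r) (i', j)))
        = fun i' => Function.update z i (!b') i' := by
      funext i'
      by_cases h : i' = i
      · subst h
        have h1 : (fun j => flipSet (fun p : I × J => yc p.1 p.2) (D r) (i', j))
            = flipSet y' (C r) := by
          funext j
          simp only [flipSet, hDmem]
          simp [hyc]
        rw [h1]
        have h2 : g (flipSet y' (C r)) = !b' := by
          rw [← hy'b]
          exact bool_eq_not (hC1 r)
        rw [h2]
        simp [Function.update]
      · have h1 : (fun j => flipSet (fun p : I × J => yc p.1 p.2) (D r) (i', j))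
            = yc i' := by
          funext j
          simp only [flipSet, hDmem]
          simp [h]
        rw [h1, hval i']
        simp [Function.update, h]
    show comp f g (flipSet (fun p : I × J => yc p.1 p.2) (D r))
        ≠ comp f g (fun p : I × J => yc p.1 p.2)
    rw [hXval]
    show f (fun i' => g (fun j => flipSet (fun p : I × J => yc p.1 p.2) (D r) (i', j))) ≠ b
    rw [key]
    show f (Function.update z i (!b')) ≠ b
    rw [hflip]
    simp
  have hHB : HasBlocks (comp f g) (fun p : I × J => yc p.1 p.2) (bsAt g y') := by
    refine ⟨D, hblock, fun r r' hrr => ?_⟩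
    rw [Finset.disjoint_left]
    intro p hp hp'
    rw [hDmem] at hp hp'
    exact (Finset.disjoint_left.1 (hC2 r r' hrr) hp.2) hp'.2
  calc bsb g b' = bsAt g y' := hy'e
    _ ≤ bsAt (comp f g) (fun p : I × J => yc p.1 p.2) := le_bsAt hHB
    _ ≤ bsb (comp f g) b := bsAt_le_bsb hXval

end Comp

/-! ### sensitive edges -/

lemma path_lemma (f : (I → Bool) → Bool) :
    ∀ x y : I → Bool, x ≤ y → f x ≠ f y →
      ∃ z i, z i = false ∧ f z = f x ∧ f (Function.update z i true) ≠ f x := by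
  suffices H : ∀ k, ∀ x y : I → Bool,
      (Finset.univ.filter (fun i => x i ≠ y i)).card ≤ k → x ≤ y → f x ≠ f y →
      ∃ z i, z i = false ∧ f z = f x ∧ f (Function.update z i true) ≠ f x by
    intro x y hle hne
    exact H _ x y le_rfl hle hne
  intro k
  induction k with
  | zero =>
    intro x y hcard hle hne
    exfalso
    apply hne
    have hxy : x = y := by
      funext i
      by_contra hi
      have : i ∈ Finset.univ.filter (fun i => x i ≠ y i) := by simp [hi]
      have := Finset.card_pos.2 ⟨i, this⟩
      omega
    rw [hxy]
  | succ k ih =>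
    intro x y hcard hle hne
    have hex : ∃ i, x i ≠ y i := by
      by_contra hno
      push_neg at hno
      exact hne (by rw [funext hno])
    obtain ⟨i, hi⟩ := hex
    have hxi : x i = false ∧ y i = true := by
      have := hle i
      revert this hi
      cases x i <;> cases y i <;> simp
    by_cases hfx' : f (Function.update x i true) = f x
    · -- recurse on (update x i true, y)
      have hle' : Function.update x i true ≤ y := by
        intro j
        by_cases hj : j = i
        · subst hj
          simp [Function.update, hxi.2]
        · simp only [Function.update, dif_neg hj]
          exact hle j
      have hsub : (Finset.univ.filter (fun j => Function.update x i true j ≠ y j))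
          ⊆ (Finset.univ.filter (fun j => x j ≠ y j)).erase i := by
        intro j hj
        simp only [Finset.mem_filter, Finset.mem_univ, true_and] at hj
        rw [Finset.mem_erase]
        constructor
        · intro hji
          subst hji
          apply hj
          simp [Function.update, hxi.2]
        · simp only [Finset.mem_filter, Finset.mem_univ, true_and]
          intro hje
          apply hj
          have hji : j ≠ i := by
            intro hji; subst hji
            apply hj; simp [Function.update, hxi.2]
          rw [Function.update_of_ne hji, hje]
      have hcard' : (Finset.univ.filter (fun j => Function.update x i true j ≠ y j)).card ≤ k := by
        have h1 := Finset.card_le_card hsub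
        have h2 : i ∈ Finset.univ.filter (fun j => x j ≠ y j) := by simp [hi]
        have h3 := Finset.card_erase_of_mem h2
        omega
      obtain ⟨z, j, hz1, hz2, hz3⟩ := ih (Function.update x i true) y hcard' hle' (hfx' ▸ hne)
      exact ⟨z, j, hz1, hz2.trans hfx', fun hc => hz3 (by rw [hc, hfx'])⟩
    · exact ⟨x, i, hxi.1, rfl, hfx'⟩

lemma edge_lemma (f : (I → Bool) → Bool) (hmono : ¬ Monotone f) (hanti : ¬ Antitone f) :
    ∀ b b' : Bool, ∃ z i, f z = b ∧ z i = b' ∧ f (Function.update z i (!b')) = !b := by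
  -- from non-monotonicity: a falling edge
  obtain ⟨x₁, y₁, hle₁, hf₁⟩ : ∃ x y, x ≤ y ∧ ¬ (f x ≤ f y) := by
    by_contra h
    push_neg at h
    exact hmono fun {a b} hab => h a b hab
  have hfx₁ : f x₁ = true ∧ f y₁ = false := by
    revert hf₁; cases hx : f x₁ <;> cases hy : f y₁ <;> simp
  obtain ⟨z₁, i₁, hz₁f, hz₁v, hz₁n⟩ :=
    path_lemma f x₁ y₁ hle₁ (by rw [hfx₁.1, hfx₁.2]; simp)
  rw [hfx₁.1] at hz₁v hz₁n
  have hz₁n' : f (Function.update z₁ i₁ true) = false := bool_eq_not hz₁n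
  -- from non-antitonicity: a rising edge
  obtain ⟨x₂, y₂, hle₂, hf₂⟩ : ∃ x y, x ≤ y ∧ ¬ (f y ≤ f x) := by
    by_contra h
    push_neg at h
    exact hanti fun {a b} hab => h a b hab
  have hfx₂ : f x₂ = false ∧ f y₂ = true := by
    revert hf₂; cases hx : f x₂ <;> cases hy : f y₂ <;> simp
  obtain ⟨z₂, i₂, hz₂f, hz₂v, hz₂n⟩ :=
    path_lemma f x₂ y₂ hle₂ (by rw [hfx₂.1, hfx₂.2]; simp)
  rw [hfx₂.1] at hz₂v hz₂n
  have hz₂n' : f (Function.update z₂ i₂ true) = true := bool_eq_not hz₂n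
  intro b b'
  have hupd₁ : Function.update (Function.update z₁ i₁ true) i₁ false = z₁ := by
    rw [← hz₁f]
    rw [Function.update_idem]
    exact Function.update_eq_self i₁ z₁
  have hupd₂ : Function.update (Function.update z₂ i₂ true) i₂ false = z₂ := by
    rw [← hz₂f]
    rw [Function.update_idem]
    exact Function.update_eq_self i₂ z₂
  cases b <;> cases b'
  · -- b = false, b' = false : rising edge
    exact ⟨z₂, i₂, hz₂v, hz₂f, by simpa using hz₂n'⟩
  · -- b = false, b' = true : top of falling edge
    refine ⟨Function.update z₁ i₁ true, i₁, hz₁n', by simp [Function.update], ?_⟩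
    show f (Function.update (Function.update z₁ i₁ true) i₁ false) = !false
    rw [hupd₁, hz₁v]
    rfl
  · -- b = true, b' = false : falling edge
    exact ⟨z₁, i₁, hz₁v, hz₁f, by simpa using hz₁n'⟩
  · -- b = true, b' = true : top of rising edge
    refine ⟨Function.update z₂ i₂ true, i₂, hz₂n', by simp [Function.update], ?_⟩
    show f (Function.update (Function.update z₂ i₂ true) i₂ false) = !true
    rw [hupd₂, hz₂v]
    rfl

/-! ### iteration structure -/

section Iter

variable {n : ℕ}

def consEquiv (n k : ℕ) : (Fin n × (Fin k → Fin n)) ≃ (Fin (k + 1) → Fin n) where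
  toFun p := Fin.cons p.1 p.2
  invFun t := (t 0, Fin.tail t)
  left_inv p := by
    ext <;> simp
  right_inv t := Fin.cons_self_tail t

def appendEquiv (n m k : ℕ) :
    ((Fin m → Fin n) × (Fin k → Fin n)) ≃ (Fin (m + k) → Fin n) where
  toFun p := Fin.append p.1 p.2
  invFun u := (fun s => u (Fin.castAdd k s), fun t => u (Fin.natAdd m t))
  left_inv p := by
    ext j
    · simp [Fin.append_left]
    · simp [Fin.append_right]
  right_inv u := by
    funext j
    induction j using Fin.addCases with
    | left j => simp [Fin.append_left]
    | right j => simp [Fin.append_right]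

lemma iter_succ_eq (f : (Fin n → Bool) → Bool) (k : ℕ) :
    iter f (k + 1) = reindex (consEquiv n k) (comp f (iter f k)) := rfl

lemma iter_cast (f : (Fin n → Bool) → Bool) {k k' : ℕ} (h : k = k')
    (X : (Fin k' → Fin n) → Bool) :
    iter f k' X = iter f k (fun s => X (fun j => s (Fin.cast h.symm j))) := by
  subst h
  rfl

lemma iter_add_apply (f : (Fin n → Bool) → Bool) :
    ∀ (m k : ℕ) (X : (Fin (m + k) → Fin n) → Bool),
      iter f (m + k) X = iter f m (fun s => iter f k (fun t => X (Fin.append s t))) := by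
  intro m
  induction m with
  | zero =>
    intro k X
    rw [iter_cast f (Nat.zero_add k).symm X]
    show iter f k _ = iter f k _
    congr 1
    funext t
    congr 1
    funext j
    rw [show (fun i : Fin 0 => i.elim0) = (Fin.elim0 : Fin 0 → Fin n) from rfl,
      Fin.elim0_append]
    rfl
  | succ m ih =>
    intro k X
    have h1 : m + k + 1 = m + 1 + k := (Nat.succ_add m k).symm
    rw [iter_cast f h1 X]
    show f _ = f _
    congr 1
    funext i
    rw [ih k]
    congr 1
    funext s
    congr 1
    funext t
    congr 1
    rw [Fin.append_cons]
    rfl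

lemma iter_add_eq (f : (Fin n → Bool) → Bool) (m k : ℕ) :
    iter f (m + k) = reindex (appendEquiv n m k) (comp (iter f m) (iter f k)) := by
  funext X
  rw [iter_add_apply f m k X]
  rfl

lemma iter_attains (f : (Fin n → Bool) → Bool) (hf : ∀ b, ∃ u, f u = b) :
    ∀ (k : ℕ) (b : Bool), ∃ X, iter f k X = b := by
  intro k
  induction k with
  | zero => intro b; exact ⟨fun _ => b, rfl⟩
  | succ k ih =>
    intro b
    obtain ⟨u, hu⟩ := hf b
    choose Y hY using ih
    refine ⟨fun t => Y (u (t 0)) (Fin.tail t), ?_⟩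
    have key : iter f (k + 1) (fun t => Y (u (t 0)) (Fin.tail t))
        = f (fun i => iter f k (Y (u i))) := rfl
    rw [key]
    have h3 : (fun i => iter f k (Y (u i))) = u := funext fun i => hY (u i)
    rw [h3, hu]

end Iter

lemma bs_le_card (f : (I → Bool) → Bool) : bs f ≤ Fintype.card I := by
  obtain ⟨x, he⟩ := bs_witness f
  rw [he]
  exact bsAt_le_card

end BS

open Filter BS in
/-- Let `f` be an `n`-variate boolean function that is neither
monotone nor antimonotone.  Then `lim_{k→∞} bs(f^(k))^(1/k)` exists and is finite. -/
theorem bs_lim_exists {n : ℕ} (f : (Fin n → Bool) → Bool)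
    (hmono : ¬ Monotone f) (hanti : ¬ Antitone f) :
    ∃ L : ℝ, Filter.Tendsto (fun k : ℕ => (bs (iter f k) : ℝ) ^ (1 / (k : ℝ)))
      Filter.atTop (nhds L) := by
  classical
  -- basic facts about f
  have hn : 1 ≤ n := by
    by_contra h
    apply hmono
    intro a b _
    have : a = b := funext fun i => absurd i.isLt (by omega)
    rw [this]
  have hboth : ∀ b, ∃ u, f u = b := by
    obtain ⟨x₁, y₁, _, hf₁⟩ : ∃ x y, x ≤ y ∧ ¬ (f x ≤ f y) := by
      by_contra h
      push_neg at h
      exact hmono fun {a b} hab => h a b hab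
    intro b
    cases b
    · exact ⟨y₁, by revert hf₁; cases f x₁ <;> cases f y₁ <;> simp⟩
    · exact ⟨x₁, by revert hf₁; cases f x₁ <;> cases f y₁ <;> simp⟩
  have hatt : ∀ (k : ℕ) (b : Bool), ∃ X, iter f k X = b := iter_attains f hboth
  set W : ℕ → ℕ := fun k => min (bsb (iter f k) false) (bsb (iter f k) true) with hWdef
  set A : ℕ → ℕ := fun k => bs (iter f k) with hAdef
  -- (1) 1 ≤ W k
  have hW1 : ∀ k, 1 ≤ W k := by
    intro k
    have h1 : ∀ b, 1 ≤ bsb (iter f k) b := by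
      intro b
      obtain ⟨X, hX⟩ := hatt k b
      obtain ⟨Y, hY⟩ := hatt k (!b)
      have := one_le_bsAt (f := iter f k) (x := X) ⟨Y, by rw [hX, hY]; cases b <;> simp⟩
      exact this.trans (bsAt_le_bsb hX)
    exact le_min (h1 false) (h1 true)
  -- (2) supermultiplicativity
  have hsuper : ∀ m k, W m * W k ≤ W (m + k) := by
    intro m k
    have hb : ∀ b, bsb (iter f m) b * W k ≤ bsb (iter f (m + k)) b := by
      intro b
      rw [iter_add_eq f m k, bsb_reindex]
      exact bsb_comp_ge (iter f m) (iter f k) (hatt k) b (hatt m b)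
    refine le_min (le_trans ?_ (hb false)) (le_trans ?_ (hb true))
    · exact Nat.mul_le_mul (min_le_left _ _) le_rfl
    · exact Nat.mul_le_mul (min_le_right _ _) le_rfl
  -- (3) cross bound : A k ≤ W (k+1)
  have hcross : ∀ k, A k ≤ W (k + 1) := by
    intro k
    have hb : ∀ b b', bsb (iter f k) b' ≤ bsb (iter f (k + 1)) b := by
      intro b b'
      rw [iter_succ_eq f k, bsb_reindex]
      obtain ⟨z, i, hz, hzi, hflip⟩ := edge_lemma f hmono hanti b b'
      exact bsb_comp_cross f (iter f k) (hatt k) z i hz hzi hflip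
    have hA : A k ≤ max (bsb (iter f k) false) (bsb (iter f k) true) := bs_le_max _
    refine le_min (hA.trans (max_le (hb false false) (hb false true)))
      (hA.trans (max_le (hb true false) (hb true true)))
  -- (4) W k ≤ A k
  have hWA : ∀ k, W k ≤ A k := fun k => le_trans (min_le_left _ _) (bsb_le_bs _ _)
  -- (5) A k ≤ n ^ k
  have hbound : ∀ k, A k ≤ n ^ k := by
    intro k
    have := bs_le_card (iter f k)
    rwa [Fintype.card_fun, Fintype.card_fin, Fintype.card_fin] at this
  -- real versions
  have hWpos : ∀ k, (0 : ℝ) < (W k : ℝ) := by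
    intro k
    exact_mod_cast Nat.lt_of_lt_of_le Nat.zero_lt_one (hW1 k)
  have hApos : ∀ k, (0 : ℝ) < (A k : ℝ) := by
    intro k
    exact lt_of_lt_of_le (hWpos k) (by exact_mod_cast hWA k)
  -- Fekete
  set v : ℕ → ℝ := fun k => -Real.log (W k) with hvdef
  have hsub : Subadditive v := by
    intro m k
    show -Real.log (W (m + k)) ≤ -Real.log (W m) + -Real.log (W k)
    rw [← neg_add, neg_le_neg_iff, ← Real.log_mul (ne_of_gt (hWpos m)) (ne_of_gt (hWpos k))]
    apply Real.log_le_log (mul_pos (hWpos m) (hWpos k))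
    exact_mod_cast hsuper m k
  have hbdd : BddBelow (Set.range fun k => v k / k) := by
    refine ⟨-Real.log n, ?_⟩
    rintro r ⟨k, rfl⟩
    show -Real.log n ≤ v k / k
    rcases Nat.eq_zero_or_pos k with rfl | hk
    · simp only [Nat.cast_zero, div_zero]
      simp [Real.log_natCast_nonneg n]
    · have hk0 : (0 : ℝ) < (k : ℝ) := by exact_mod_cast hk
      have h1 : Real.log (W k) ≤ (k : ℝ) * Real.log n := by
        calc Real.log (W k) ≤ Real.log ((n : ℝ) ^ k) := by
              apply Real.log_le_log (hWpos k)
              have := (hWA k).trans (hbound k)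
              exact_mod_cast this
          _ = (k : ℝ) * Real.log n := by rw [Real.log_pow]
      rw [le_div_iff₀ hk0]
      show -Real.log n * k ≤ -Real.log (W k)
      nlinarith [h1]
  have hv := hsub.tendsto_lim hbdd
  set ℓ : ℝ := -hsub.lim with hldef
  have hlogW : Tendsto (fun k => Real.log (W k) / k) atTop (nhds ℓ) := by
    have := hv.neg
    refine this.congr fun k => ?_
    show -(v k / k) = Real.log (W k) / k
    rw [hvdef]
    ring
  -- shifted upper bound
  have hshift : Tendsto (fun k : ℕ => Real.log (W (k + 1)) / ((k : ℝ) + 1)) atTop (nhds ℓ) := by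
    have := hlogW.comp (tendsto_add_atTop_nat 1)
    refine this.congr fun k => ?_
    show Real.log (W (k + 1)) / ((k + 1 : ℕ) : ℝ) = _
    push_cast
    ring
  have hratio : Tendsto (fun k : ℕ => ((k : ℝ) + 1) / k) atTop (nhds 1) := by
    have h0 : Tendsto (fun k : ℕ => 1 / (k : ℝ)) atTop (nhds 0) := tendsto_one_div_atTop_nhds_zero_nat
    have h2 : Tendsto (fun k : ℕ => 1 + 1 / (k : ℝ)) atTop (nhds (1 + 0)) :=
      tendsto_const_nhds.add h0
    rw [add_zero] at h2
    refine h2.congr' ?_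
    filter_upwards [eventually_ge_atTop 1] with k hk
    have hk0 : (k : ℝ) ≠ 0 := by
      have : (0 : ℝ) < (k : ℝ) := by exact_mod_cast hk
      exact ne_of_gt this
    field_simp
  have hupper : Tendsto (fun k : ℕ => Real.log (W (k + 1)) / k) atTop (nhds ℓ) := by
    have hmul := hshift.mul hratio
    rw [mul_one] at hmul
    refine hmul.congr' ?_
    filter_upwards [eventually_ge_atTop 1] with k hk
    have hk0 : (k : ℝ) ≠ 0 := by
      have : (0 : ℝ) < (k : ℝ) := by exact_mod_cast hk
      exact ne_of_gt this
    have hk1 : ((k : ℝ) + 1) ≠ 0 := by positivity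
    field_simp
  -- squeeze
  have hlogA : Tendsto (fun k : ℕ => Real.log (A k) / k) atTop (nhds ℓ) := by
    refine tendsto_of_tendsto_of_tendsto_of_le_of_le hlogW hupper ?_ ?_
    · intro k
      rcases Nat.eq_zero_or_pos k with rfl | hk
      · simp
      · have hk0 : (0 : ℝ) < (k : ℝ) := by exact_mod_cast hk
        refine (div_le_div_iff_of_pos_right hk0).2 ?_
        exact Real.log_le_log (hWpos k) (by exact_mod_cast hWA k)
    · intro k
      rcases Nat.eq_zero_or_pos k with rfl | hk
      · simp
      · have hk0 : (0 : ℝ) < (k : ℝ) := by exact_mod_cast hk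
        refine (div_le_div_iff_of_pos_right hk0).2 ?_
        exact Real.log_le_log (hApos k) (by exact_mod_cast hcross k)
  -- conclude
  refine ⟨Real.exp ℓ, ?_⟩
  have hexp : Tendsto (fun k : ℕ => Real.exp (Real.log (A k) / k)) atTop (nhds (Real.exp ℓ)) :=
    (Real.continuous_exp.tendsto ℓ).comp hlogA
  refine hexp.congr fun k => ?_
  show Real.exp (Real.log (A k) / k) = (A k : ℝ) ^ (1 / (k : ℝ))
  rw [Real.rpow_def_of_pos (hApos k), mul_one_div]
end

section
/- There exist constants c_1, c_2 > 0 and N ∈ ℕ such that for every n ≥ N there is a boolean function f : {0,1}^{n²} → {0,1} with bs(f) ≤ bs*(f) ≤ c_1 · n and C(f) ≥ c_2 · n². -/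
set_option linter.unusedSectionVars false
set_option linter.dupNamespace false
set_option maxHeartbeats 1000000


open Filter

namespace QSep
open Finset BS

variable {I : Type*} [Fintype I] [DecidableEq I]
variable {f : (I → Bool) → Bool} {x : I → Bool}

lemma flipSet_empty : flipSet x (∅ : Finset I) = x :=
  funext fun i => by simp [flipSet]

lemma block_nonempty {B : Finset I} (h : IsBlock f x B) : B.Nonempty := by
  rcases B.eq_empty_or_nonempty with h0 | h1
  · exfalso
    apply h
    rw [h0, flipSet_empty]
  · exact h1

/-- The set whose sup is `fbsAt`. -/
def fbsSet (f : (I → Bool) → Bool) (x : I → Bool) : Set ℝ :=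
  {s | ∃ lam : Finset I → ℝ, (∀ B, 0 ≤ lam B) ∧
    (∀ B, ¬ IsBlock f x B → lam B = 0) ∧
    (∀ i : I, ∑ B ∈ Finset.univ.filter (fun B : Finset I => i ∈ B), lam B ≤ 1) ∧
    s = ∑ B : Finset I, lam B}

lemma fbsAt_eq : fbsAt f x = sSup (fbsSet f x) := rfl

lemma fbs_set_le (w : I → ℝ) (hw0 : ∀ i, 0 ≤ w i)
    (hcov : ∀ B, IsBlock f x B → 1 ≤ ∑ i ∈ B, w i)
    {s : ℝ} (hs : s ∈ fbsSet f x) : s ≤ ∑ i, w i := by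
  obtain ⟨lam, h0, hblk, hcap, rfl⟩ := hs
  have step1 : ∑ B : Finset I, lam B ≤ ∑ B : Finset I, lam B * ∑ i ∈ B, w i := by
    apply Finset.sum_le_sum
    intro B _
    by_cases hB : IsBlock f x B
    · nlinarith [h0 B, hcov B hB]
    · simp [hblk B hB]
  have step2 : ∑ B : Finset I, lam B * ∑ i ∈ B, w i
      = ∑ i : I, (∑ B ∈ Finset.univ.filter (fun B : Finset I => i ∈ B), lam B) * w i := by
    have e1 : ∀ B : Finset I, lam B * ∑ i ∈ B, w i
        = ∑ i : I, (if i ∈ B then lam B * w i else 0) := by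
      intro B
      rw [Finset.mul_sum, Finset.sum_ite_mem, Finset.univ_inter]
    simp_rw [e1]
    rw [Finset.sum_comm]
    refine Finset.sum_congr rfl fun i _ => ?_
    rw [Finset.sum_mul, ← Finset.sum_filter]
  have step3 : ∀ i : I,
      (∑ B ∈ Finset.univ.filter (fun B : Finset I => i ∈ B), lam B) * w i ≤ w i := by
    intro i
    exact mul_le_of_le_one_left (hw0 i) (hcap i)
  calc ∑ B : Finset I, lam B ≤ _ := step1
    _ = _ := step2
    _ ≤ ∑ i, w i := Finset.sum_le_sum (fun i _ => step3 i)

lemma fbsAt_le (w : I → ℝ) (hw0 : ∀ i, 0 ≤ w i)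
    (hcov : ∀ B, IsBlock f x B → 1 ≤ ∑ i ∈ B, w i) :
    fbsAt f x ≤ ∑ i, w i :=
  Real.sSup_le (fun _ hs => fbs_set_le w hw0 hcov hs)
    (Finset.sum_nonneg fun i _ => hw0 i)

lemma fbsSet_bddAbove : BddAbove (fbsSet f x) := by
  refine ⟨∑ _i : I, (1:ℝ), fun s hs => fbs_set_le _ (fun _ => zero_le_one) ?_ hs⟩
  intro B hB
  have h1 := block_nonempty hB
  have h2 : 1 ≤ (B.card : ℝ) := by exact_mod_cast Finset.card_pos.mpr h1
  calc (1:ℝ) ≤ (B.card : ℝ) := h2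
    _ = ∑ _i ∈ B, (1:ℝ) := by rw [Finset.sum_const, nsmul_eq_mul, mul_one]

lemma le_fbsAt {k : ℕ} (Bf : Fin k → Finset I) (hb : ∀ t, IsBlock f x (Bf t))
    (hd : ∀ t t', t ≠ t' → Disjoint (Bf t) (Bf t')) : (k : ℝ) ≤ fbsAt f x := by
  classical
  have hinj : Function.Injective Bf := by
    intro t t' h
    by_contra hne
    have hdisj := hd t t' hne
    rw [h] at hdisj
    obtain ⟨i, hi⟩ := block_nonempty (hb t')
    exact Finset.disjoint_left.mp hdisj (h ▸ hi) hi
  set lam : Finset I → ℝ := fun B => if ∃ t, Bf t = B then 1 else 0 with hlam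
  have hmem : (k : ℝ) ∈ fbsSet f x := by
    refine ⟨lam, ?_, ?_, ?_, ?_⟩
    · intro B; simp only [hlam]; split <;> norm_num
    · intro B hB
      simp only [hlam]
      rw [if_neg]
      rintro ⟨t, rfl⟩
      exact hB (hb t)
    · intro i
      have : ∑ B ∈ Finset.univ.filter (fun B : Finset I => i ∈ B), lam B
          = ((Finset.univ.filter (fun B : Finset I => i ∈ B)).filter
              (fun B => ∃ t, Bf t = B)).card := by
        rw [Finset.sum_boole]
      rw [this]
      norm_cast
      apply Finset.card_le_one.mpr
      intro B1 h1 B2 h2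
      simp only [Finset.mem_filter, Finset.mem_univ, true_and] at h1 h2
      obtain ⟨hi1, t1, rfl⟩ := h1
      obtain ⟨hi2, t2, rfl⟩ := h2
      congr 1
      by_contra hne
      exact Finset.disjoint_left.mp (hd t1 t2 hne) hi1 hi2
    · rw [Finset.sum_boole]
      norm_cast
      have : Finset.univ.filter (fun B => ∃ t, Bf t = B) = Finset.image Bf Finset.univ := by
        ext B
        simp [eq_comm]
      rw [this, Finset.card_image_of_injective _ hinj, Finset.card_univ, Fintype.card_fin]
  exact le_csSup fbsSet_bddAbove hmem

lemma bs_inner_le_card {k : ℕ}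
    (hk : k ∈ {k | ∃ B : Fin k → Finset I, (∀ t, IsBlock f x (B t)) ∧
      ∀ t t', t ≠ t' → Disjoint (B t) (B t')}) : k ≤ Fintype.card I := by
  obtain ⟨Bf, hb, hd⟩ := hk
  have : Function.Injective (fun t => (block_nonempty (hb t)).choose) := by
    intro t t' h
    by_contra hne
    have h1 := (block_nonempty (hb t)).choose_spec
    have h2 := (block_nonempty (hb t')).choose_spec
    simp only at h
    rw [h] at h1
    exact Finset.disjoint_left.mp (hd t t' hne) h1 h2
  simpa using Fintype.card_le_of_injective _ this

lemma bsAt_le_fbsAt : (bsAt f x : ℝ) ≤ fbsAt f x := by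
  have hne : {k | ∃ B : Fin k → Finset I, (∀ t, IsBlock f x (B t)) ∧
      ∀ t t', t ≠ t' → Disjoint (B t) (B t')}.Nonempty := by
    exact ⟨0, Fin.elim0, fun t => t.elim0, fun t => t.elim0⟩
  have hbdd : BddAbove {k | ∃ B : Fin k → Finset I, (∀ t, IsBlock f x (B t)) ∧
      ∀ t t', t ≠ t' → Disjoint (B t) (B t')} :=
    ⟨Fintype.card I, fun k hk => bs_inner_le_card hk⟩
  obtain ⟨Bf, hb, hd⟩ := Nat.sSup_mem hne hbdd
  exact le_fbsAt Bf hb hd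

lemma bsAt_le_card : bsAt f x ≤ Fintype.card I :=
  csSup_le ⟨0, Fin.elim0, fun t => t.elim0, fun t => t.elim0⟩
    fun _ hk => bs_inner_le_card hk

lemma cast_bs_le_fbs : (bs f : ℝ) ≤ fbs f := by
  have hne : {k | ∃ x, k = bsAt f x}.Nonempty := ⟨bsAt f (fun _ => false), _, rfl⟩
  have hbdd : BddAbove {k | ∃ x, k = bsAt f x} := by
    refine ⟨Fintype.card I, ?_⟩
    rintro k ⟨x, rfl⟩
    exact bsAt_le_card
  obtain ⟨x₀, hx₀⟩ := Nat.sSup_mem hne hbdd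
  have h1 : (bs f : ℝ) = (bsAt f x₀ : ℝ) := by rw [bs, hx₀]
  rw [h1]
  refine le_trans bsAt_le_fbsAt (le_csSup ?_ ⟨x₀, rfl⟩)
  have : {s | ∃ x, s = fbsAt f x} = Set.range (fun x => fbsAt f x) := by
    ext s; simp [eq_comm]
  rw [this]
  exact (Set.finite_range _).bddAbove

lemma fbs_le {c : ℝ} (hc : 0 ≤ c) (h : ∀ x, fbsAt f x ≤ c) : fbs f ≤ c := by
  apply Real.sSup_le _ hc
  rintro s ⟨x, rfl⟩
  exact h x

lemma CAt_ge (m : ℕ)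
    (h : ∀ S : Finset I, (∀ B, IsBlock f x B → (S ∩ B).Nonempty) → m ≤ S.card) :
    m ≤ CAt f x := by
  have hne : {k | ∃ S : Finset I, (∀ B, IsBlock f x B → (S ∩ B).Nonempty) ∧
      k = S.card}.Nonempty := by
    refine ⟨Finset.univ.card, Finset.univ, fun B hB => ?_, rfl⟩
    simpa using block_nonempty hB
  obtain ⟨S, hS, hcard⟩ := Nat.sInf_mem hne
  rw [CAt, hcard]
  exact h S hS

lemma CAt_le_card : CAt f x ≤ Fintype.card I := by
  have : CAt f x ≤ (Finset.univ : Finset I).card := by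
    apply Nat.sInf_le
    refine ⟨Finset.univ, fun B hB => ?_, rfl⟩
    simpa using block_nonempty hB
  rwa [Finset.card_univ] at this

lemma CAt_le_Cm : CAt f x ≤ Cm f := by
  refine le_csSup ⟨Fintype.card I, ?_⟩ ⟨x, rfl⟩
  rintro k ⟨y, rfl⟩
  exact CAt_le_card





open Finset

abbrev F2 := ZMod 2

/-- Hamming weight -/
def wt {m : ℕ} (v : Fin m → F2) : ℕ := ∑ j, (if v j ≠ 0 then 1 else 0)

lemma wt_eq_card {m : ℕ} (v : Fin m → F2) :
    wt v = (Finset.univ.filter (fun j => v j ≠ 0)).card := by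
  rw [wt, Finset.card_filter]

lemma wt_le {m : ℕ} (v : Fin m → F2) : wt v ≤ m := by
  rw [wt_eq_card]
  calc _ ≤ (univ : Finset (Fin m)).card := Finset.card_le_card (Finset.filter_subset _ _)
    _ = m := by simp

def sgn : F2 → ℤ := fun a => if a = 0 then 1 else -1

lemma sgn_add_one : ∀ a : F2, sgn (a + 1) = - sgn a := by decide

lemma f2_eq_one : ∀ a : F2, a ≠ 0 → a = 1 := by decide

lemma sgn_zero : sgn 0 = 1 := rfl

/-- flip one coordinate -/
def flipc {m : ℕ} (j₀ : Fin m) (v : Fin m → F2) : Fin m → F2 :=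
  Function.update v j₀ (v j₀ + 1)

lemma flipc_flipc {m : ℕ} (j₀ : Fin m) (v : Fin m → F2) : flipc j₀ (flipc j₀ v) = v := by
  funext j
  by_cases h : j = j₀
  · subst h
    simp only [flipc, Function.update_self]
    have h2 : ∀ a : F2, a + 1 + 1 = a := by decide
    exact h2 _
  · simp only [flipc]
    rw [Function.update_of_ne h, Function.update_of_ne h]

lemma flipc_ne {m : ℕ} (j₀ : Fin m) (v : Fin m → F2) : flipc j₀ v ≠ v := by
  intro h
  have h1 := congrFun h j₀
  simp only [flipc, Function.update_self] at h1
  have : ∀ a : F2, a + 1 = a → False := by decide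
  exact this _ h1

lemma flipc_apply_ne {m : ℕ} {j₀ j : Fin m} (v : Fin m → F2) (h : j ≠ j₀) :
    flipc j₀ v j = v j := Function.update_of_ne h _ _

lemma dot_flipc {m : ℕ} (b v : Fin m → F2) (j₀ : Fin m) :
    dotProduct b (flipc j₀ v) = dotProduct b v + b j₀ := by
  unfold dotProduct flipc
  rw [← Finset.add_sum_erase _ (fun j => b j * Function.update v j₀ (v j₀ + 1) j) (Finset.mem_univ j₀),
      ← Finset.add_sum_erase _ (fun j => b j * v j) (Finset.mem_univ j₀)]
  have he : ∀ j ∈ univ.erase j₀, b j * Function.update v j₀ (v j₀ + 1) j = b j * v j := by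
    intro j hj
    rw [Function.update_of_ne (Finset.mem_erase.mp hj).1]
  rw [Finset.sum_congr rfl he, Function.update_self]
  ring

/-- sum of signs vanishes when some relevant coordinate is free -/
lemma sum_sgn_eq_zero {m : ℕ} (s : Finset (Fin m → F2)) (b : Fin m → F2) (c : F2) (j₀ : Fin m)
    (hb : b j₀ ≠ 0) (hs : ∀ v ∈ s, flipc j₀ v ∈ s) :
    ∑ v ∈ s, sgn (dotProduct b v + c) = 0 := by
  apply Finset.sum_involution (fun v _ => flipc j₀ v)
  · intro v hv
    rw [dot_flipc, f2_eq_one _ hb]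
    have : dotProduct b v + 1 + c = (dotProduct b v + c) + 1 := by ring
    rw [this, sgn_add_one]
    ring
  · intro v _ _
    exact flipc_ne j₀ v
  · exact hs
  · intro v hv
    exact flipc_flipc j₀ v

lemma sum_sgn_dot_right {m : ℕ} (v : Fin m → F2) (hv : v ≠ 0) :
    ∑ u : Fin m → F2, sgn (dotProduct u v) = 0 := by
  obtain ⟨j₀, hj₀⟩ := Function.ne_iff.mp hv
  have : ∀ u : Fin m → F2, dotProduct u v = dotProduct v u :=
    fun u => dotProduct_comm u v
  simp_rw [this]
  have := sum_sgn_eq_zero (univ : Finset (Fin m → F2)) v 0 j₀ hj₀ (fun w _ => Finset.mem_univ _)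
  simpa using this

/-- key surjectivity: codewords match any pattern on any small set -/
lemma exists_codeword_matching {n k t : ℕ} (H : Matrix (Fin k) (Fin n) F2)
    (hH : ∀ u : Fin k → F2, u ≠ 0 → t < wt (Matrix.vecMul u H))
    (T : Finset (Fin n)) (hT : T.card ≤ t) (p : Fin n → F2) :
    ∃ y : Fin n → F2, H.mulVec y = 0 ∧ ∀ j ∈ T, y j = p j := by
  classical
  set P : Finset (Fin n → F2) := univ.filter (fun y => ∀ j ∈ T, y j = p j) with hP
  by_contra hcon
  push_neg at hcon
  have hz1 : ∑ y ∈ P, ∑ u : Fin k → F2, sgn (dotProduct u (H.mulVec y)) = 0 := by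
    apply Finset.sum_eq_zero
    intro y hy
    have hvy : H.mulVec y ≠ 0 := by
      intro h0
      obtain ⟨j, hj, hne⟩ := hcon y h0
      exact hne ((Finset.mem_filter.mp hy).2 j hj)
    exact sum_sgn_dot_right _ hvy
  have hz2 : ∑ y ∈ P, ∑ u : Fin k → F2, sgn (dotProduct u (H.mulVec y)) = P.card := by
    rw [Finset.sum_comm]
    have hrw : ∀ u (y : Fin n → F2), sgn (dotProduct u (H.mulVec y))
        = sgn (dotProduct (Matrix.vecMul u H) y) := by
      intro u y
      rw [Matrix.dotProduct_mulVec]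
    simp_rw [hrw]
    rw [← Finset.add_sum_erase _ _ (Finset.mem_univ (0 : Fin k → F2))]
    have h0term : ∑ y ∈ P, sgn (dotProduct (Matrix.vecMul (0 : Fin k → F2) H) y)
        = P.card := by
      have : ∀ y : Fin n → F2, dotProduct (Matrix.vecMul (0 : Fin k → F2) H) y = 0 := by
        intro y
        rw [Matrix.zero_vecMul, zero_dotProduct]
      simp_rw [this, sgn_zero]
      simp
    have hrest : ∑ u ∈ (univ : Finset (Fin k → F2)).erase 0,
        ∑ y ∈ P, sgn (dotProduct (Matrix.vecMul u H) y) = 0 := by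
      apply Finset.sum_eq_zero
      intro u hu
      have hu0 : u ≠ 0 := (Finset.mem_erase.mp hu).1
      set b := Matrix.vecMul u H with hb
      have hwt : T.card < wt b := lt_of_le_of_lt hT (hH u hu0)
      -- find j₀ with b j₀ ≠ 0 and j₀ ∉ T
      have : ¬ (univ.filter (fun j => b j ≠ 0)) ⊆ T := by
        intro hsub
        have := Finset.card_le_card hsub
        rw [← wt_eq_card] at this
        omega
      obtain ⟨j₀, hj₀mem, hj₀T⟩ := Finset.not_subset.mp this
      have hbj₀ : b j₀ ≠ 0 := (Finset.mem_filter.mp hj₀mem).2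
      have hflip : ∀ y ∈ P, flipc j₀ y ∈ P := by
        intro y hy
        rw [hP, Finset.mem_filter] at hy ⊢
        refine ⟨Finset.mem_univ _, fun j hj => ?_⟩
        have hjne : j ≠ j₀ := fun h => hj₀T (h ▸ hj)
        rw [flipc_apply_ne _ hjne]
        exact hy.2 j hj
      have := sum_sgn_eq_zero P b 0 j₀ hbj₀ hflip
      simpa using this
    rw [h0term, hrest, add_zero]
  have hPpos : 0 < P.card := by
    apply Finset.card_pos.mpr
    refine ⟨fun j => if j ∈ T then p j else 0, ?_⟩
    rw [hP, Finset.mem_filter]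
    exact ⟨Finset.mem_univ _, fun j hj => by simp [hj]⟩
  rw [hz1] at hz2
  have : (0:ℤ) < (P.card : ℤ) := by exact_mod_cast hPpos
  omega


open Finset






lemma f2_add_eq_zero : ∀ a b : F2, a + b = 0 → a = b := by decide

def lowWt (n t : ℕ) : Finset (Fin n → F2) := univ.filter (fun v => wt v ≤ t)

lemma zero_mem_lowWt (n t : ℕ) : (0 : Fin n → F2) ∈ lowWt n t := by
  rw [lowWt, mem_filter]
  refine ⟨mem_univ _, ?_⟩
  have : wt (0 : Fin n → F2) = 0 := by simp [wt]
  omega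

lemma card_mulVec_zero (k : ℕ) {n : ℕ} (v : Fin n → F2) (hv : v ≠ 0) :
    ((univ : Finset (Matrix (Fin k) (Fin n) F2)).filter (fun M => M.mulVec v = 0)).card
      ≤ 2 ^ ((n-1) * k) := by
  classical
  obtain ⟨j₀, hj₀⟩ := Function.ne_iff.mp hv
  have hv1 : v j₀ = 1 := f2_eq_one _ hj₀
  have hcard : Fintype.card (Fin k → {j : Fin n // j ≠ j₀} → F2) = 2 ^ ((n-1) * k) := by
    rw [Fintype.card_fun, Fintype.card_fun]
    have h1 : Fintype.card {j : Fin n // j ≠ j₀} = n - 1 := by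
      have := Fintype.card_subtype_compl (fun j : Fin n => j = j₀)
      simp only [Fintype.card_subtype_eq, Fintype.card_fin] at this
      convert this using 2
    rw [h1, ZMod.card, Fintype.card_fin, ← pow_mul]
  have hinj : ((univ : Finset (Matrix (Fin k) (Fin n) F2)).filter
      (fun M => M.mulVec v = 0)).card
      ≤ ((univ : Finset (Fin k → {j : Fin n // j ≠ j₀} → F2))).card := by
    apply Finset.card_le_card_of_injOn
      (fun (M : Matrix (Fin k) (Fin n) F2) => (fun i (j : {j : Fin n // j ≠ j₀}) => M i j.1))
      (fun M _ => Finset.mem_univ _)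
    intro M hM M' hM' heq
    simp only [Finset.coe_filter, Set.mem_setOf_eq, mem_univ, true_and] at hM hM'
    funext i j
    by_cases hj : j = j₀
    · subst hj
      have hM0 : ∑ j', M i j' * v j' = 0 := by
        have := congrFun hM i
        simpa [Matrix.mulVec, dotProduct] using this
      have hM0' : ∑ j', M' i j' * v j' = 0 := by
        have := congrFun hM' i
        simpa [Matrix.mulVec, dotProduct] using this
      rw [← Finset.add_sum_erase _ _ (Finset.mem_univ j)] at hM0 hM0'
      have hMi : M i j = ∑ j' ∈ univ.erase j, M i j' * v j' := by
        have := f2_add_eq_zero _ _ hM0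
        rwa [hv1, mul_one] at this
      have hMi' : M' i j = ∑ j' ∈ univ.erase j, M' i j' * v j' := by
        have := f2_add_eq_zero _ _ hM0'
        rwa [hv1, mul_one] at this
      rw [hMi, hMi']
      apply Finset.sum_congr rfl
      intro j' hj'
      have : M i j' = M' i j' := by
        have := congrFun (congrFun heq i) ⟨j', (Finset.mem_erase.mp hj').1⟩
        exact this
      rw [this]
    · exact congrFun (congrFun heq i) ⟨j, hj⟩
  calc _ ≤ _ := hinj
    _ = 2 ^ ((n-1)*k) := by rw [Finset.card_univ, hcard]

lemma card_vecMul_low {k : ℕ} (n t : ℕ) (u : Fin k → F2) (hu : u ≠ 0) :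
    ((univ : Finset (Matrix (Fin k) (Fin n) F2)).filter
        (fun M => wt (Matrix.vecMul u M) ≤ t)).card
      ≤ (lowWt n t).card * 2 ^ (n * (k-1)) := by
  classical
  obtain ⟨i₀, hi₀⟩ := Function.ne_iff.mp hu
  have hu1 : u i₀ = 1 := f2_eq_one _ hi₀
  have hcard2 : Fintype.card ({i : Fin k // i ≠ i₀} → Fin n → F2) = 2 ^ (n * (k-1)) := by
    rw [Fintype.card_fun, Fintype.card_fun]
    have h1 : Fintype.card {i : Fin k // i ≠ i₀} = k - 1 := by
      have := Fintype.card_subtype_compl (fun i : Fin k => i = i₀)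
      simp only [Fintype.card_subtype_eq, Fintype.card_fin] at this
      convert this using 2
    rw [h1, ZMod.card, Fintype.card_fin, ← pow_mul, Nat.mul_comm]
  have hinj : ((univ : Finset (Matrix (Fin k) (Fin n) F2)).filter
      (fun M => wt (Matrix.vecMul u M) ≤ t)).card
      ≤ ((lowWt n t) ×ˢ (univ : Finset ({i : Fin k // i ≠ i₀} → Fin n → F2))).card := by
    apply Finset.card_le_card_of_injOn
      (fun (M : Matrix (Fin k) (Fin n) F2) =>
        ((Matrix.vecMul u M, fun (i : {i : Fin k // i ≠ i₀}) => M i.1) :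
          (Fin n → F2) × ({i : Fin k // i ≠ i₀} → Fin n → F2)))
    · intro M hM
      rw [Finset.mem_coe, Finset.mem_filter] at hM
      rw [Finset.mem_coe, Finset.mem_product]
      exact ⟨by rw [lowWt, mem_filter]; exact ⟨mem_univ _, hM.2⟩, mem_univ _⟩
    intro M hM M' hM' heq
    simp only [Prod.mk.injEq] at heq
    obtain ⟨heq1, heq2⟩ := heq
    funext i j
    by_cases hi : i = i₀
    · subst hi
      have e1 : ∑ i', u i' * M i' j = ∑ i', u i' * M' i' j := by
        have := congrFun heq1 j
        simpa [Matrix.vecMul, dotProduct] using this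
      rw [← Finset.add_sum_erase _ (fun i' => u i' * M i' j) (Finset.mem_univ i),
          ← Finset.add_sum_erase _ (fun i' => u i' * M' i' j) (Finset.mem_univ i)] at e1
      have e2 : ∑ i' ∈ univ.erase i, u i' * M i' j = ∑ i' ∈ univ.erase i, u i' * M' i' j := by
        apply Finset.sum_congr rfl
        intro i' hi'
        have : M i' j = M' i' j :=
          congrFun (congrFun heq2 ⟨i', (Finset.mem_erase.mp hi').1⟩) j
        rw [this]
      rw [e2] at e1
      have e3 : u i * M i j = u i * M' i j := add_right_cancel e1
      rwa [hu1, one_mul, one_mul] at e3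
    · exact congrFun (congrFun heq2 ⟨i, hi⟩) j
  calc _ ≤ _ := hinj
    _ = (lowWt n t).card * 2 ^ (n * (k-1)) := by
      rw [Finset.card_product, Finset.card_univ, hcard2]

lemma sum_pow_wt : ∀ n : ℕ, ∑ v : Fin n → F2, 4^(n - wt v) = 5^n := by
  intro n
  induction n with
  | zero =>
    rw [Fintype.sum_eq_single (fun i => i.elim0)]
    · simp
    · intro v hv
      exfalso
      apply hv
      funext i
      exact i.elim0
  | succ n ih =>
    rw [← Equiv.sum_comp (Fin.consEquiv (fun _ : Fin (n+1) => F2))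
      (fun v => 4^(n + 1 - wt v)), Fintype.sum_prod_type]
    have hwt : ∀ (a : F2) (w : Fin n → F2),
        wt (Fin.cons a w : Fin (n+1) → F2) = (if a ≠ 0 then 1 else 0) + wt w := by
      intro a w
      rw [wt, Fin.sum_univ_succ, Fin.cons_zero, wt]
      simp only [Fin.cons_succ]
    have hone : ∀ (a : F2) (w : Fin n → F2),
        (Fin.consEquiv (fun _ : Fin (n+1) => F2)) (a, w) = Fin.cons a w := fun a w => rfl
    have huniv : (univ : Finset F2) = {0, 1} := by decide
    rw [huniv, Finset.sum_insert (by decide), Finset.sum_singleton]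
    have e0 : ∑ w : Fin n → F2,
        4 ^ (n + 1 - wt ((Fin.consEquiv (fun _ : Fin (n+1) => F2)) (0, w))) = 4 * 5^n := by
      rw [← ih, Finset.mul_sum]
      apply Finset.sum_congr rfl
      intro w _
      rw [hone, hwt]
      simp only [ne_eq, not_true_eq_false, if_neg, ite_false]
      have hw := wt_le w
      have h2 : n + 1 - (0 + wt w) = (n - wt w) + 1 := by omega
      rw [h2, pow_succ]
      ring
    have e1 : ∑ w : Fin n → F2,
        4 ^ (n + 1 - wt ((Fin.consEquiv (fun _ : Fin (n+1) => F2)) (1, w))) = 5^n := by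
      rw [← ih]
      apply Finset.sum_congr rfl
      intro w _
      rw [hone, hwt]
      have h11 : ((1 : F2) ≠ 0) = True := by simp
      simp only [h11, if_true]
      congr 1
      omega
    rw [e0, e1]
    ring

lemma V_mul_le (n t : ℕ) : (lowWt n t).card * 4^(n - t) ≤ 5^n := by
  calc (lowWt n t).card * 4^(n - t) = ∑ _v ∈ lowWt n t, 4^(n-t) := by
        rw [Finset.sum_const, smul_eq_mul]
    _ ≤ ∑ v ∈ lowWt n t, 4^(n - wt v) := by
        apply Finset.sum_le_sum
        intro v hv
        rw [lowWt, mem_filter] at hv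
        apply Nat.pow_le_pow_right (by norm_num)
        omega
    _ ≤ ∑ v : Fin n → F2, 4^(n - wt v) :=
        Finset.sum_le_sum_of_subset (Finset.filter_subset _ _)
    _ = 5^n := sum_pow_wt n

lemma numeric_5n (n : ℕ) (hn : 2^20 ≤ n) :
    5^n ≤ 2^(2*(n - n/128) + (n/2 - 1)) := by
  have h1 : 5^n ≤ 5^(25*(n/25+1)) := Nat.pow_le_pow_right (by norm_num) (by omega)
  have h2 : (5:ℕ)^(25*(n/25+1)) = (5^25)^(n/25+1) := by rw [pow_mul]
  have h3 : ((5:ℕ)^25)^(n/25+1) ≤ (2^59)^(n/25+1) :=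
    Nat.pow_le_pow_left (by norm_num) _
  have h4 : ((2:ℕ)^59)^(n/25+1) = 2^(59*(n/25+1)) := by rw [← pow_mul]
  have h5 : (2:ℕ)^(59*(n/25+1)) ≤ 2^(2*(n - n/128) + (n/2 - 1)) :=
    Nat.pow_le_pow_right (by norm_num) (by omega)
  omega

lemma V_le (n : ℕ) (hn : 2^20 ≤ n) : (lowWt n (n/128)).card ≤ 2^(n/2 - 1) := by
  have h1 := V_mul_le n (n/128)
  have h2 := numeric_5n n hn
  have h3 : (2:ℕ)^(2*(n - n/128) + (n/2 - 1)) = 2^(n/2-1) * 4^(n - n/128) := by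
    rw [pow_add, show (4:ℕ) = 2^2 from rfl, ← pow_mul, mul_comm]
  have h4 : (lowWt n (n/128)).card * 4^(n - n/128) ≤ 2^(n/2-1) * 4^(n - n/128) := by
    omega
  exact Nat.le_of_mul_le_mul_right h4 (by positivity)

lemma master_ineq (n k : ℕ) (hk : 1 ≤ k) (h2k : 2*k ≤ n) :
    (2^(k-1) - 1) * 2^((n-1)*k) + 2^k * (2^(k-1) * 2^(n*(k-1))) < 2^(n*k) := by
  obtain ⟨k', rfl⟩ : ∃ k', k = k'+1 := ⟨k-1, by omega⟩
  have hn1 : 1 ≤ n := by omega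
  obtain ⟨n', rfl⟩ : ∃ n', n = n'+1 := ⟨n-1, by omega⟩
  simp only [Nat.add_sub_cancel]
  obtain ⟨m, hm⟩ : ∃ m, m = n'*k' := ⟨_, rfl⟩
  have E1 : n'*(k'+1) = m + n' := by rw [hm]; ring
  have E2 : (n'+1)*k' = m + k' := by rw [hm]; ring
  have E3 : (n'+1)*(k'+1) = m + n' + k' + 1 := by rw [hm]; ring
  rw [E1, E2, E3]
  have hab : 2^(m+n') * 2^k' = 2^(m+n'+k') := by rw [← pow_add]
  have hfirst : (2^k' - 1) * 2^(m+n') = 2^(m+n'+k') - 2^(m+n') := by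
    rw [Nat.sub_mul, one_mul, mul_comm, hab]
  have hsecond : 2^(k'+1) * (2^k' * 2^(m+k')) ≤ 2^(m+n'+k') := by
    rw [← pow_add, ← pow_add]
    apply Nat.pow_le_pow_right (by norm_num)
    omega
  have hC : 2^(m+n'+k'+1) = 2^(m+n'+k') + 2^(m+n'+k') := by
    rw [pow_succ]
    ring
  have hA1 : 1 ≤ 2^(m+n') := Nat.one_le_two_pow
  have hAB : 2^(m+n') ≤ 2^(m+n'+k') := Nat.pow_le_pow_right (by norm_num) (by omega)
  rw [hfirst, hC]
  omega


lemma exists_good_H (n : ℕ) (hn : 2^20 ≤ n) :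
    ∃ H : Matrix (Fin (n/2)) (Fin n) F2,
      (∀ v : Fin n → F2, v ≠ 0 → H.mulVec v = 0 → n/128 < wt v) ∧
      (∀ u : Fin (n/2) → F2, u ≠ 0 → n/128 < wt (Matrix.vecMul u H)) := by
  classical
  set k := n/2 with hk
  set t := n/128 with ht
  have hk1 : 1 ≤ k := by omega
  have h2k : 2*k ≤ n := by omega
  set bad := (univ : Finset (Matrix (Fin k) (Fin n) F2)).filter (fun M =>
      (∃ v : Fin n → F2, v ≠ 0 ∧ wt v ≤ t ∧ M.mulVec v = 0) ∨
      (∃ u : Fin k → F2, u ≠ 0 ∧ wt (Matrix.vecMul u M) ≤ t)) with hbad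
  have hcardM : Fintype.card (Matrix (Fin k) (Fin n) F2) = 2^(n*k) := by
    rw [show Fintype.card (Matrix (Fin k) (Fin n) F2)
        = Fintype.card (Fin k → Fin n → F2) from rfl,
      Fintype.card_fun, Fintype.card_fun, ZMod.card, Fintype.card_fin, Fintype.card_fin,
      ← pow_mul]
  have hV : (lowWt n t).card ≤ 2^(k-1) := by
    rw [ht, hk]
    exact V_le n hn
  have hsub : bad ⊆
      (((lowWt n t).erase 0).biUnion (fun v =>
        univ.filter (fun M : Matrix (Fin k) (Fin n) F2 => M.mulVec v = 0))) ∪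
      (((univ : Finset (Fin k → F2)).erase 0).biUnion (fun u =>
        univ.filter (fun M : Matrix (Fin k) (Fin n) F2 => wt (Matrix.vecMul u M) ≤ t))) := by
    intro M hM
    rw [hbad, mem_filter] at hM
    rcases hM.2 with ⟨v, hv0, hvwt, hveq⟩ | ⟨u, hu0, huwt⟩
    · apply Finset.mem_union_left
      apply Finset.mem_biUnion.mpr
      refine ⟨v, ?_, ?_⟩
      · rw [Finset.mem_erase]
        exact ⟨hv0, by rw [lowWt, mem_filter]; exact ⟨mem_univ _, hvwt⟩⟩
      · rw [mem_filter]; exact ⟨mem_univ _, hveq⟩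
    · apply Finset.mem_union_right
      apply Finset.mem_biUnion.mpr
      refine ⟨u, ?_, ?_⟩
      · rw [Finset.mem_erase]; exact ⟨hu0, mem_univ _⟩
      · rw [mem_filter]; exact ⟨mem_univ _, huwt⟩
  have hc1 : (((lowWt n t).erase 0).biUnion (fun v =>
      univ.filter (fun M : Matrix (Fin k) (Fin n) F2 => M.mulVec v = 0))).card
      ≤ (2^(k-1) - 1) * 2^((n-1)*k) := by
    apply le_trans (Finset.card_biUnion_le)
    have hstep : ∀ v ∈ (lowWt n t).erase 0,
        (univ.filter (fun M : Matrix (Fin k) (Fin n) F2 => M.mulVec v = 0)).card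
          ≤ 2^((n-1)*k) := fun v hv => card_mulVec_zero k v (Finset.mem_erase.mp hv).1
    apply le_trans (Finset.sum_le_sum hstep)
    rw [Finset.sum_const, smul_eq_mul]
    apply Nat.mul_le_mul_right
    have h0m : (0 : Fin n → F2) ∈ lowWt n t := zero_mem_lowWt n t
    have hce := Finset.card_erase_of_mem h0m
    have hpos := Finset.card_pos.mpr ⟨(0 : Fin n → F2), h0m⟩
    omega
  have hc2 : (((univ : Finset (Fin k → F2)).erase 0).biUnion (fun u =>
      univ.filter (fun M : Matrix (Fin k) (Fin n) F2 => wt (Matrix.vecMul u M) ≤ t))).card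
      ≤ 2^k * (2^(k-1) * 2^(n*(k-1))) := by
    apply le_trans (Finset.card_biUnion_le)
    have hstep : ∀ u ∈ (univ : Finset (Fin k → F2)).erase 0,
        (univ.filter (fun M : Matrix (Fin k) (Fin n) F2 => wt (Matrix.vecMul u M) ≤ t)).card
          ≤ 2^(k-1) * 2^(n*(k-1)) := by
      intro u hu
      refine le_trans (card_vecMul_low n t u (Finset.mem_erase.mp hu).1) ?_
      exact Nat.mul_le_mul_right _ hV
    apply le_trans (Finset.sum_le_sum hstep)
    rw [Finset.sum_const, smul_eq_mul]
    apply Nat.mul_le_mul_right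
    calc ((univ : Finset (Fin k → F2)).erase 0).card
        ≤ (univ : Finset (Fin k → F2)).card := Finset.card_le_card (Finset.erase_subset _ _)
      _ = 2^k := by rw [Finset.card_univ, Fintype.card_fun, ZMod.card, Fintype.card_fin]
  have hbadlt : bad.card < Fintype.card (Matrix (Fin k) (Fin n) F2) := by
    have h1 := Finset.card_le_card hsub
    have h2 := Finset.card_union_le
      (((lowWt n t).erase 0).biUnion (fun v =>
        univ.filter (fun M : Matrix (Fin k) (Fin n) F2 => M.mulVec v = 0)))
      (((univ : Finset (Fin k → F2)).erase 0).biUnion (fun u =>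
        univ.filter (fun M : Matrix (Fin k) (Fin n) F2 => wt (Matrix.vecMul u M) ≤ t)))
    have hm := master_ineq n k hk1 h2k
    rw [hcardM]
    omega
  obtain ⟨M, hM⟩ : ∃ M, M ∉ bad := by
    by_contra hcon
    push_neg at hcon
    have hsub2 : (univ : Finset (Matrix (Fin k) (Fin n) F2)) ⊆ bad := fun M _ => hcon M
    have := Finset.card_le_card hsub2
    rw [Finset.card_univ] at this
    omega
  refine ⟨M, ?_, ?_⟩
  · intro v hv0 hveq
    by_contra hle
    push_neg at hle
    exact hM (by rw [hbad, mem_filter]; exact ⟨mem_univ _, Or.inl ⟨v, hv0, hle, hveq⟩⟩)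
  · intro u hu0
    by_contra hle
    push_neg at hle
    exact hM (by rw [hbad, mem_filter]; exact ⟨mem_univ _, Or.inr ⟨u, hu0, hle⟩⟩)



def b2f : Bool → F2 := fun b => if b then 1 else 0

lemma b2f_add_ne : ∀ a b : Bool, (b2f a + b2f b ≠ 0) ↔ a ≠ b := by decide
lemma b2f_if : ∀ a : F2, b2f (if a = 1 then true else false) = a := by decide
lemma bool_if_b2f : ∀ b : Bool, (if b2f b = 1 then true else false) = b := by decide
lemma bool_flip_eq : ∀ a b : Bool, a ≠ b → (!a) = b := by decide

def d2 {m : ℕ} (y z : Fin m → Bool) : ℕ := (Finset.univ.filter (fun j => y j ≠ z j)).card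

lemma d2_triangle {m : ℕ} (a b c : Fin m → Bool) : d2 a c ≤ d2 a b + d2 b c := by
  have hsub : (Finset.univ.filter (fun j => a j ≠ c j))
      ⊆ (Finset.univ.filter (fun j => a j ≠ b j)) ∪ (Finset.univ.filter (fun j => b j ≠ c j)) := by
    intro j hj
    rw [mem_filter] at hj
    rw [Finset.mem_union, mem_filter, mem_filter]
    by_cases h : a j = b j
    · exact Or.inr ⟨mem_univ _, fun hbc => hj.2 (h.trans hbc)⟩
    · exact Or.inl ⟨mem_univ _, h⟩
  calc d2 a c ≤ _ := Finset.card_le_card hsub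
    _ ≤ _ := Finset.card_union_le _ _

lemma d2_eq_zero {m : ℕ} {y z : Fin m → Bool} (h : d2 y z = 0) : y = z := by
  funext j
  by_contra hj
  have : j ∈ Finset.univ.filter (fun j => y j ≠ z j) := by
    rw [mem_filter]; exact ⟨mem_univ _, hj⟩
  rw [d2, Finset.card_eq_zero] at h
  rw [h] at this
  exact absurd this (Finset.notMem_empty _)

section Construction

variable (n : ℕ) (H : Matrix (Fin (n/2)) (Fin n) F2)

def inCode (y : Fin n → Bool) : Prop := H.mulVec (fun j => b2f (y j)) = 0

instance : DecidablePred (inCode n H) := fun y => by unfold inCode; infer_instance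

lemma inCode_false : inCode n H (fun _ => false) := by
  have : (fun j : Fin n => b2f false) = (0 : Fin n → F2) := by
    funext j; rfl
  unfold inCode
  rw [this, Matrix.mulVec_zero]

lemma dist_code
    (h1 : ∀ v : Fin n → F2, v ≠ 0 → H.mulVec v = 0 → n/128 < wt v)
    {y z : Fin n → Bool} (hy : inCode n H y) (hz : inCode n H z) (hne : y ≠ z) :
    n/128 < d2 y z := by
  set v : Fin n → F2 := fun j => b2f (y j) + b2f (z j) with hv
  have hvsum : v = (fun j => b2f (y j)) + (fun j => b2f (z j)) := rfl
  have hv0 : H.mulVec v = 0 := by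
    rw [hvsum, Matrix.mulVec_add, hy, hz, add_zero]
  have hvne : v ≠ 0 := by
    obtain ⟨j, hj⟩ := Function.ne_iff.mp hne
    intro hcon
    have := congrFun hcon j
    exact (b2f_add_ne _ _).mpr hj this
  have := h1 v hvne hv0
  have hwt : wt v = d2 y z := by
    rw [wt_eq_card, d2]
    congr 1
    apply Finset.filter_congr
    intro j _
    exact b2f_add_ne (y j) (z j)
  omega

lemma match_code
    (h2 : ∀ u : Fin (n/2) → F2, u ≠ 0 → n/128 < wt (Matrix.vecMul u H))
    (T : Finset (Fin n)) (hT : T.card ≤ n/128) (p : Fin n → Bool) :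
    ∃ y, inCode n H y ∧ ∀ j ∈ T, y j = p j := by
  obtain ⟨yF, hy1, hy2⟩ := exists_codeword_matching H h2 T hT (fun j => b2f (p j))
  refine ⟨fun j => if yF j = 1 then true else false, ?_, ?_⟩
  · unfold inCode
    have : (fun j => b2f (if yF j = 1 then true else false)) = yF := by
      funext j; exact b2f_if _
    rw [this]
    exact hy1
  · intro j hj
    show (if yF j = 1 then true else false) = p j
    rw [hy2 j hj]
    exact bool_if_b2f _

lemma exists_xstar
    (h1 : ∀ v : Fin n → F2, v ≠ 0 → H.mulVec v = 0 → n/128 < wt v)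
    (hn : 2^20 ≤ n) : ∃ xs : Fin n → Bool, ¬ inCode n H xs := by
  have hn0 : 0 < n := by omega
  have hex : ∃ w : Fin n → F2, H.mulVec w ≠ 0 := by
    by_contra hcon
    push_neg at hcon
    set v : Fin n → F2 := fun j => if j = ⟨0, hn0⟩ then 1 else 0 with hv
    have hvne : v ≠ 0 := by
      intro h
      have h0 := congrFun h ⟨0, hn0⟩
      rw [hv] at h0
      simp at h0
    have hwt : wt v = 1 := by
      rw [wt_eq_card]
      have : Finset.univ.filter (fun j => v j ≠ 0) = {⟨0, hn0⟩} := by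
        ext j
        simp only [mem_filter, mem_univ, true_and, Finset.mem_singleton, hv]
        by_cases h : j = ⟨0, hn0⟩ <;> simp [h]
      rw [this, Finset.card_singleton]
    have := h1 v hvne (hcon v)
    omega
  obtain ⟨w, hw⟩ := hex
  refine ⟨fun j => if w j = 1 then true else false, ?_⟩
  unfold inCode
  have : (fun j => b2f (if w j = 1 then true else false)) = w := by
    funext j; exact b2f_if _
  rw [this]
  exact hw

def emb : Fin n × Fin n ≃ Fin (n^2) := finProdFinEquiv.trans (finCongr (pow_two n).symm)

def rowv (x : Fin (n^2) → Bool) (i : Fin n) : Fin n → Bool := fun j => x (emb n (i,j))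

def F : (Fin (n^2) → Bool) → Bool := fun x => decide (∃ i, inCode n H (rowv n x i))

lemma F_eq_true {x : Fin (n^2) → Bool} :
    F n H x = true ↔ ∃ i, inCode n H (rowv n x i) := by
  rw [F, decide_eq_true_eq]

lemma F_eq_false {x : Fin (n^2) → Bool} :
    F n H x = false ↔ ∀ i, ¬ inCode n H (rowv n x i) := by
  rw [F, decide_eq_false_iff_not, not_exists]

lemma rowv_flip (x : Fin (n^2) → Bool) (B : Finset (Fin (n^2))) (i : Fin n) (j : Fin n) :
    rowv n (flipSet x B) i j
      = if emb n (i,j) ∈ B then !(x (emb n (i,j))) else x (emb n (i,j)) := rfl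

lemma rowv_flip_eq_of_disjoint (x : Fin (n^2) → Bool) (B : Finset (Fin (n^2))) (i : Fin n)
    (h : ∀ j : Fin n, emb n (i,j) ∉ B) : rowv n (flipSet x B) i = rowv n x i := by
  funext j
  rw [rowv_flip, if_neg (h j)]
  rfl

lemma mem_of_rowdiff {x : Fin (n^2) → Bool} {B : Finset (Fin (n^2))} {i j : Fin n}
    (h : rowv n (flipSet x B) i j ≠ rowv n x i j) : emb n (i,j) ∈ B := by
  by_contra hc
  rw [rowv_flip, if_neg hc] at h
  exact h rfl

end Construction


section Main
open Finset BS
variable (n : ℕ) (H : Matrix (Fin (n/2)) (Fin n) F2)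

lemma d2_comm {m : ℕ} (y z : Fin m → Bool) : d2 y z = d2 z y := by
  unfold d2
  congr 1
  apply Finset.filter_congr
  intro j _
  exact ⟨fun h => Ne.symm h, fun h => Ne.symm h⟩

lemma emb_inj_snd {i j j' : Fin n} (h : emb n (i, j) = emb n (i, j')) : j = j' := by
  have := (emb n).injective h
  exact (Prod.mk.injEq _ _ _ _).mp this |>.2

lemma fbsAt_bound
    (h1 : ∀ v : Fin n → F2, v ≠ 0 → H.mulVec v = 0 → n/128 < wt v)
    (hn : 2^20 ≤ n)
    (x : Fin (n^2) → Bool) :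
    fbsAt (F n H) x ≤ 257 * n := by
  have htn : (n:ℝ) ≤ 128 * ((n/128 : ℕ) + 1) := by
    have : n ≤ 128 * (n/128 + 1) := by omega
    exact_mod_cast this
  have htpos : (0:ℝ) < ((n/128 : ℕ) : ℝ) + 1 := by positivity
  by_cases hfx : F n H x = true
  · obtain ⟨i₀, hi₀⟩ := (F_eq_true n H).mp hfx
    have hw0 : ∀ p : Fin (n^2), (0:ℝ) ≤ (if ((emb n).symm p).1 = i₀ then 1 else 0) := by
      intro p; split <;> norm_num
    have hcov : ∀ B, IsBlock (F n H) x B →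
        1 ≤ ∑ p ∈ B, (if ((emb n).symm p).1 = i₀ then (1:ℝ) else 0) := by
      intro B hB
      have hfd : F n H (flipSet x B) = false := by
        cases hcase : F n H (flipSet x B)
        · rfl
        · exact absurd (hcase.trans hfx.symm) hB
      have hrow : ¬ (∀ j : Fin n, emb n (i₀, j) ∉ B) := by
        intro hdisj
        have hre := rowv_flip_eq_of_disjoint n x B i₀ hdisj
        have h2 := (F_eq_false n H).mp hfd i₀
        rw [hre] at h2
        exact h2 hi₀
      push_neg at hrow
      obtain ⟨j, hj⟩ := hrow
      have hwp : (if ((emb n).symm (emb n (i₀, j))).1 = i₀ then (1:ℝ) else 0) = 1 := by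
        rw [Equiv.symm_apply_apply]
        simp
      calc (1:ℝ) = _ := hwp.symm
        _ ≤ _ := Finset.single_le_sum (fun p _ => hw0 p) hj
    refine le_trans (fbsAt_le _ hw0 hcov) ?_
    have hsum : ∑ p : Fin (n^2), (if ((emb n).symm p).1 = i₀ then (1:ℝ) else 0) = n := by
      rw [← Equiv.sum_comp (emb n) (fun p => (if ((emb n).symm p).1 = i₀ then (1:ℝ) else 0))]
      have : ∀ q : Fin n × Fin n,
          (if ((emb n).symm (emb n q)).1 = i₀ then (1:ℝ) else 0)
            = (if q.1 = i₀ then (1:ℝ) else 0) := by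
        intro q; rw [Equiv.symm_apply_apply]
      rw [Finset.sum_congr rfl (fun q _ => this q), Fintype.sum_prod_type]
      have hinner : ∀ i : Fin n, ∑ _j : Fin n, (if i = i₀ then (1:ℝ) else 0)
          = (if i = i₀ then (n:ℝ) else 0) := by
        intro i
        rw [Finset.sum_const, nsmul_eq_mul, Finset.card_univ, Fintype.card_fin]
        split <;> ring
      rw [Finset.sum_congr rfl (fun i _ => hinner i), Finset.sum_ite_eq' Finset.univ i₀]
      simp
    rw [hsum]
    nlinarith [Nat.cast_nonneg (α := ℝ) n]
  · have hfalse : F n H x = false := by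
      cases hcase : F n H x
      · rfl
      · exact absurd hcase hfx
    have hall : ∀ i, ¬ inCode n H (rowv n x i) := (F_eq_false n H).mp hfalse
    have hex : ∀ i : Fin n, ∃ c, inCode n H c ∧
        ∀ c', inCode n H c' → d2 (rowv n x i) c ≤ d2 (rowv n x i) c' := by
      intro i
      obtain ⟨c, hc1, hc2⟩ := Finset.exists_min_image (univ.filter (inCode n H))
        (fun c => d2 (rowv n x i) c)
        ⟨_, by rw [mem_filter]; exact ⟨mem_univ _, inCode_false n H⟩⟩
      exact ⟨c, (mem_filter.mp hc1).2,
        fun c' hc' => hc2 c' (by rw [mem_filter]; exact ⟨mem_univ _, hc'⟩)⟩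
    choose c₀ hc₀1 hc₀2 using hex
    have hρpos : ∀ i, 1 ≤ d2 (rowv n x i) (c₀ i) := by
      intro i
      by_contra h
      push_neg at h
      have heq : rowv n x i = c₀ i := d2_eq_zero (by omega)
      exact hall i (heq ▸ hc₀1 i)
    -- weight function
    set w : Fin (n^2) → ℝ := fun p =>
      2/(((n/128 : ℕ):ℝ)+1) + (if ((emb n).symm p).2 ∈
          univ.filter (fun j => rowv n x (((emb n).symm p).1) j ≠ c₀ (((emb n).symm p).1) j)
        then ((d2 (rowv n x (((emb n).symm p).1)) (c₀ (((emb n).symm p).1)) : ℕ) : ℝ)⁻¹ else 0)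
      with hwdef
    have hw0 : ∀ p, 0 ≤ w p := by
      intro p
      rw [hwdef]
      have h2 : (0:ℝ) ≤ 2/(((n/128 : ℕ):ℝ)+1) := by positivity
      have h3 : (0:ℝ) ≤ (if ((emb n).symm p).2 ∈
          univ.filter (fun j => rowv n x (((emb n).symm p).1) j ≠ c₀ (((emb n).symm p).1) j)
        then ((d2 (rowv n x (((emb n).symm p).1)) (c₀ (((emb n).symm p).1)) : ℕ) : ℝ)⁻¹ else 0) := by
        split
        · positivity
        · exact le_refl 0
      exact add_nonneg h2 h3
    have hwval : ∀ i j, w (emb n (i,j)) = 2/(((n/128 : ℕ):ℝ)+1)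
        + (if j ∈ univ.filter (fun j' => rowv n x i j' ≠ c₀ i j')
            then ((d2 (rowv n x i) (c₀ i) : ℕ) : ℝ)⁻¹ else 0) := by
      intro i j
      rw [hwdef]
      simp only [Equiv.symm_apply_apply]
    have hcov : ∀ B, IsBlock (F n H) x B → 1 ≤ ∑ p ∈ B, w p := by
      intro B hB
      have hft : F n H (flipSet x B) = true := by
        cases hcase : F n H (flipSet x B)
        · exact absurd (hcase.trans hfalse.symm) hB
        · rfl
      obtain ⟨i, hi⟩ := (F_eq_true n H).mp hft
      set c := rowv n (flipSet x B) i with hc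
      set Dc := univ.filter (fun j => rowv n x i j ≠ c j) with hDc
      have himg : Dc.image (fun j => emb n (i,j)) ⊆ B := by
        intro p hp
        obtain ⟨j, hj, rfl⟩ := Finset.mem_image.mp hp
        apply mem_of_rowdiff n
        exact Ne.symm (mem_filter.mp hj).2
      have him := Finset.sum_image (f := w) (g := fun j => emb n (i,j)) (s := Dc)
        (fun j _ j' _ h => emb_inj_snd n h)
      have hsum1 : ∑ j ∈ Dc, w (emb n (i,j)) ≤ ∑ p ∈ B, w p := by
        rw [← him]
        exact Finset.sum_le_sum_of_subset_of_nonneg himg (fun p _ _ => hw0 p)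
      have hgoal : (1:ℝ) ≤ ∑ j ∈ Dc, w (emb n (i,j)) := by
        have hρne : (((d2 (rowv n x i) (c₀ i) : ℕ)):ℝ) ≠ 0 := by
          have := hρpos i
          exact Nat.cast_ne_zero.mpr (by omega)
        by_cases hcc : c = c₀ i
        · have hterm : ∀ j ∈ Dc, ((d2 (rowv n x i) (c₀ i) : ℕ):ℝ)⁻¹ ≤ w (emb n (i,j)) := by
            intro j hj
            rw [hwval]
            have hmem : j ∈ univ.filter (fun j' => rowv n x i j' ≠ c₀ i j') := by
              rw [mem_filter]
              refine ⟨mem_univ _, ?_⟩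
              have := (mem_filter.mp hj).2
              rw [hcc] at this
              exact this
            rw [if_pos hmem]
            have hd : (0:ℝ) ≤ 2/((↑(n/128):ℝ)+1) := by positivity
            linarith
          have hsum2 : ∑ j ∈ Dc, (((d2 (rowv n x i) (c₀ i) : ℕ)):ℝ)⁻¹
              ≤ ∑ j ∈ Dc, w (emb n (i,j)) := Finset.sum_le_sum hterm
          have hcard : Dc.card = d2 (rowv n x i) (c₀ i) := by
            rw [hDc, hcc]
            rfl
          have hconst : ∑ _j ∈ Dc, (((d2 (rowv n x i) (c₀ i) : ℕ)):ℝ)⁻¹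
              = (Dc.card : ℝ) * (((d2 (rowv n x i) (c₀ i) : ℕ)):ℝ)⁻¹ := by
            rw [Finset.sum_const, nsmul_eq_mul]
          have h1eq : (1:ℝ) = (Dc.card : ℝ) * (((d2 (rowv n x i) (c₀ i) : ℕ)):ℝ)⁻¹ := by
            rw [hcard]
            field_simp
          rw [h1eq, ← hconst]
          exact hsum2
        · have hcC : inCode n H c := hi
          have hmin : d2 (rowv n x i) (c₀ i) ≤ d2 (rowv n x i) c := hc₀2 i c hcC
          have hdist : (n/128 : ℕ) < d2 (c₀ i) c :=
            dist_code n H h1 (hc₀1 i) hcC (fun h => hcc h.symm)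
          have htri : d2 (c₀ i) c ≤ d2 (c₀ i) (rowv n x i) + d2 (rowv n x i) c :=
            d2_triangle _ _ _
          have hsymm : d2 (c₀ i) (rowv n x i) = d2 (rowv n x i) (c₀ i) := d2_comm _ _
          have hcard : Dc.card = d2 (rowv n x i) c := rfl
          have hkey : (n/128 : ℕ) + 1 ≤ 2 * Dc.card := by omega
          have hterm : ∀ j ∈ Dc, 2/((↑(n/128):ℝ)+1) ≤ w (emb n (i,j)) := by
            intro j hj
            rw [hwval]
            have h3 : (0:ℝ) ≤ (if j ∈ univ.filter (fun j' => rowv n x i j' ≠ c₀ i j')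
                then ((d2 (rowv n x i) (c₀ i) : ℕ) : ℝ)⁻¹ else 0) := by
              split
              · positivity
              · exact le_refl 0
            linarith
          have hsum2 : ∑ j ∈ Dc, 2/((↑(n/128):ℝ)+1) ≤ ∑ j ∈ Dc, w (emb n (i,j)) :=
            Finset.sum_le_sum hterm
          have hconst : ∑ _j ∈ Dc, 2/((↑(n/128):ℝ)+1)
              = (Dc.card : ℝ) * (2/((↑(n/128):ℝ)+1)) := by
            rw [Finset.sum_const, nsmul_eq_mul]
          have hkeyR : ((n/128:ℕ):ℝ) + 1 ≤ 2 * (Dc.card : ℝ) := by exact_mod_cast hkey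
          have h1le : (1:ℝ) ≤ (Dc.card : ℝ) * (2/((↑(n/128):ℝ)+1)) := by
            rw [mul_div_assoc']
            rw [le_div_iff₀ htpos]
            linarith
          calc (1:ℝ) ≤ _ := h1le
            _ = _ := hconst.symm
            _ ≤ _ := hsum2
      exact le_trans hgoal hsum1
    refine le_trans (fbsAt_le w hw0 hcov) ?_
    have hrowsum : ∀ i : Fin n, ∑ j : Fin n, w (emb n (i,j))
        = (n:ℝ) * (2/((↑(n/128):ℝ)+1)) + 1 := by
      intro i
      have hstep : ∀ j : Fin n, w (emb n (i,j)) = 2/((↑(n/128):ℝ)+1)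
          + (if j ∈ univ.filter (fun j' => rowv n x i j' ≠ c₀ i j')
              then ((d2 (rowv n x i) (c₀ i) : ℕ) : ℝ)⁻¹ else 0) := fun j => hwval i j
      rw [Finset.sum_congr rfl (fun j _ => hstep j), Finset.sum_add_distrib,
        Finset.sum_const, nsmul_eq_mul, Finset.card_univ, Fintype.card_fin,
        ← Finset.sum_filter, Finset.sum_const, nsmul_eq_mul]
      have hρne : (((d2 (rowv n x i) (c₀ i) : ℕ)):ℝ) ≠ 0 := by
        have := hρpos i
        exact Nat.cast_ne_zero.mpr (by omega)
      have hcard : ((univ.filter (fun j' => rowv n x i j' ≠ c₀ i j')).card : ℝ)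
          = ((d2 (rowv n x i) (c₀ i) : ℕ) : ℝ) := by norm_cast
      rw [show (filter (fun a => a ∈ filter (fun j' => rowv n x i j' ≠ c₀ i j') univ) univ)
          = filter (fun j' => rowv n x i j' ≠ c₀ i j') univ from by
        rw [Finset.filter_mem_eq_inter, Finset.univ_inter], hcard, mul_inv_cancel₀ hρne]
    have htot : ∑ p, w p = (n:ℝ) * ((n:ℝ) * (2/((↑(n/128):ℝ)+1)) + 1) := by
      rw [← Equiv.sum_comp (emb n) w, Fintype.sum_prod_type,
        Finset.sum_congr rfl (fun i _ => hrowsum i),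
        Finset.sum_const, nsmul_eq_mul, Finset.card_univ, Fintype.card_fin]
    rw [htot]
    have h2 : (n:ℝ) * ((n:ℝ) * (2/((↑(n/128):ℝ)+1))) ≤ 256 * n := by
      have hnn : (0:ℝ) ≤ (n:ℝ) := Nat.cast_nonneg n
      rw [mul_div_assoc', mul_div_assoc', div_le_iff₀ htpos]
      nlinarith
    nlinarith [Nat.cast_nonneg (α := ℝ) n]

lemma CAt_bound
    (h2 : ∀ u : Fin (n/2) → F2, u ≠ 0 → n/128 < wt (Matrix.vecMul u H))
    (xs : Fin n → Bool) (hxs : ¬ inCode n H xs) :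
    n * (n/128 + 1) ≤ CAt (F n H) (fun p => xs (((emb n).symm p).2)) := by
  classical
  set xt : Fin (n^2) → Bool := fun p => xs (((emb n).symm p).2) with hxt
  have hrow : ∀ i, rowv n xt i = xs := by
    intro i
    funext j
    show xt (emb n (i,j)) = xs j
    rw [hxt]
    simp only [Equiv.symm_apply_apply]
  have hfx : F n H xt = false := (F_eq_false n H).mpr (fun i => by rw [hrow i]; exact hxs)
  apply CAt_ge
  intro S hS
  have hTi : ∀ i : Fin n, n/128 + 1 ≤ (univ.filter (fun j => emb n (i,j) ∈ S)).card := by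
    intro i
    by_contra hcon
    push_neg at hcon
    obtain ⟨c, hc, hcT⟩ := match_code n H h2 (univ.filter (fun j => emb n (i,j) ∈ S))
      (by omega) xs
    have hcne : c ≠ xs := fun h => hxs (h ▸ hc)
    set Dc := univ.filter (fun j => xs j ≠ c j) with hDc
    set B := Dc.image (fun j => emb n (i,j)) with hB
    have hmemB : ∀ j : Fin n, emb n (i,j) ∈ B ↔ j ∈ Dc := by
      intro j
      constructor
      · intro h
        obtain ⟨j', hj', hjj⟩ := Finset.mem_image.mp h
        have := emb_inj_snd n hjj
        rwa [← this]
      · intro h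
        exact Finset.mem_image.mpr ⟨j, h, rfl⟩
    have hrowflip : rowv n (flipSet xt B) i = c := by
      funext j
      rw [rowv_flip]
      by_cases hj : j ∈ Dc
      · rw [if_pos ((hmemB j).mpr hj)]
        have hxj : xt (emb n (i,j)) = xs j := by
          rw [hxt]; simp only [Equiv.symm_apply_apply]
        rw [hxj]
        exact bool_flip_eq _ _ (mem_filter.mp hj).2
      · rw [if_neg (fun hcon2 => hj ((hmemB j).mp hcon2))]
        have hxj : xt (emb n (i,j)) = xs j := by
          rw [hxt]; simp only [Equiv.symm_apply_apply]
        rw [hxj]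
        by_contra hne
        exact hj (by rw [hDc, mem_filter]; exact ⟨mem_univ _, hne⟩)
    have hBlock : IsBlock (F n H) xt B := by
      have hft : F n H (flipSet xt B) = true :=
        (F_eq_true n H).mpr ⟨i, by rw [hrowflip]; exact hc⟩
      show F n H (flipSet xt B) ≠ F n H xt
      rw [hft, hfx]
      simp
    obtain ⟨p, hp⟩ := hS B hBlock
    rw [Finset.mem_inter] at hp
    obtain ⟨j, hjD, hpj⟩ := Finset.mem_image.mp hp.2
    have hjT : j ∈ univ.filter (fun j' => emb n (i,j') ∈ S) := by
      rw [mem_filter]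
      exact ⟨mem_univ _, by rw [hpj]; exact hp.1⟩
    have := hcT j hjT
    exact (mem_filter.mp hjD).2 this.symm
  have hcard : S.card = ∑ i : Fin n, (S.filter (fun p => ((emb n).symm p).1 = i)).card :=
    Finset.card_eq_sum_card_fiberwise (fun p _ => mem_univ _)
  have hfiber : ∀ i, (univ.filter (fun j => emb n (i,j) ∈ S)).card
      = (S.filter (fun p => ((emb n).symm p).1 = i)).card := by
    intro i
    apply Finset.card_bij (fun j _ => emb n (i,j))
    · intro j hj
      rw [mem_filter] at hj ⊢
      refine ⟨hj.2, ?_⟩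
      simp only [Equiv.symm_apply_apply]
    · intro j hj j' hj' h
      exact emb_inj_snd n h
    · intro p hp
      rw [mem_filter] at hp
      refine ⟨((emb n).symm p).2, ?_, ?_⟩
      · rw [mem_filter]
        refine ⟨mem_univ _, ?_⟩
        have : (((emb n).symm p).1, ((emb n).symm p).2) = (emb n).symm p := rfl
        rw [show (i, ((emb n).symm p).2) = (emb n).symm p from by rw [← hp.2]]
        rw [Equiv.apply_symm_apply]
        exact hp.1
      · rw [show (i, ((emb n).symm p).2) = (emb n).symm p from by rw [← hp.2]]
        rw [Equiv.apply_symm_apply]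
  calc n * (n/128+1) = ∑ _i : Fin n, (n/128+1) := by
        rw [Finset.sum_const, smul_eq_mul, Finset.card_univ, Fintype.card_fin, mul_comm]
    _ ≤ ∑ i : Fin n, (univ.filter (fun j => emb n (i,j) ∈ S)).card :=
        Finset.sum_le_sum (fun i _ => hTi i)
    _ = ∑ i : Fin n, (S.filter (fun p => ((emb n).symm p).1 = i)).card :=
        Finset.sum_congr rfl (fun i _ => hfiber i)
    _ = S.card := hcard.symm

end Main
end QSep

open BS in
/-- There are constants `c₁, c₂ > 0` and `N` such that for every
`n ≥ N` there is a boolean function `f` on `n²` variables with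
`bs(f) ≤ bs*(f) ≤ c₁·n` and `C(f) ≥ c₂·n²`. -/
theorem quadratic_separation_C_bs :
    ∃ c₁ > (0 : ℝ), ∃ c₂ > (0 : ℝ), ∃ N : ℕ, ∀ n ≥ N,
      ∃ f : (Fin (n ^ 2) → Bool) → Bool,
        (bs f : ℝ) ≤ fbs f ∧ fbs f ≤ c₁ * n ∧ c₂ * (n : ℝ) ^ 2 ≤ (Cm f : ℝ) := by
  refine ⟨257, by norm_num, 1/129, by norm_num, 2^20, ?_⟩
  intro n hn
  obtain ⟨H, h1, h2⟩ := QSep.exists_good_H n hn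
  obtain ⟨xs, hxs⟩ := QSep.exists_xstar n H h1 hn
  refine ⟨QSep.F n H, QSep.cast_bs_le_fbs, ?_, ?_⟩
  · exact QSep.fbs_le (by positivity) (fun x => QSep.fbsAt_bound n H h1 hn x)
  · have hC := QSep.CAt_bound n H h2 xs hxs
    have hCm := QSep.CAt_le_Cm (f := QSep.F n H)
      (x := fun p => xs (((QSep.emb n).symm p).2))
    have hchain : n * (n/128 + 1) ≤ Cm (QSep.F n H) := le_trans hC hCm
    have hnat : n^2 ≤ 129 * (n * (n/128 + 1)) := by
      have hq : n ≤ 128*(n/128+1) := by omega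
      calc n^2 = n * n := by ring
        _ ≤ n * (128*(n/128+1)) := Nat.mul_le_mul_left n hq
        _ = 128 * (n * (n/128+1)) := by ring
        _ ≤ 129 * (n * (n/128+1)) := Nat.mul_le_mul (by norm_num) le_rfl
    have hr1 : ((n:ℝ))^2 ≤ 129 * ((n * (n/128+1) : ℕ) : ℝ) := by exact_mod_cast hnat
    have hr2 : ((n * (n/128+1) : ℕ) : ℝ) ≤ (Cm (QSep.F n H) : ℝ) := by exact_mod_cast hchain
    linarith
end
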